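/- arXiv:2109.07585 — 2 statements merged into one kernel-verified Lean document; each statement's English description precedes it below -/
import Mathlib

section
/- Let F be a properly parametrized Markov multi-map with forward trajectory space X and associated SFT Σ_M, and let E={a∈Σ_M: aᵢ∈A^(e) for all i≥0} be the set of essential symbolic sequences. Then for every x∈X there exists a∈E such that (x_i,x_{i+1})∈G(a_i) for all i≥0. -/
open Set Topology

/-! ### Generic dynamical notions -/

/-- Topological transitivity of a map. -/
def TopTransitive {α : Type*} [TopologicalSpace α] (T : α → α) : Prop :=
  ∀ U V : Set α, IsOpen U → IsOpen V → U.Nonempty → V.Nonempty →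
    ∃ n : ℕ, (T^[n] '' U ∩ V).Nonempty

/-- Topological mixing of a map. -/
def TopMixing {α : Type*} [TopologicalSpace α] (T : α → α) : Prop :=
  ∀ U V : Set α, IsOpen U → IsOpen V → U.Nonempty → V.Nonempty →
    ∃ N : ℕ, ∀ n, N ≤ n → (T^[n] '' U ∩ V).Nonempty

/-- Density of the set of periodic points of a map. -/
def DensePeriodic {α : Type*} [TopologicalSpace α] (T : α → α) : Prop :=
  Dense {x : α | ∃ p : ℕ, 1 ≤ p ∧ T^[p] x = x}

/-- The metric `d(x,y) = sup_k |x_k - y_k|/(k+1)` on sequence spaces. -/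
noncomputable def dseq (x y : ℕ → ℝ) : ℝ := ⨆ k : ℕ, |x k - y k| / ((k : ℝ) + 1)

/-- The specification property for a map `T` with respect to a distance function `d`. -/
def SpecProp {α : Type*} (T : α → α) (d : α → α → ℝ) : Prop :=
  ∀ ε : ℝ, 0 < ε → ∃ N : ℕ, ∀ l : ℕ, ∀ x : Fin (l + 1) → α, ∀ a b : Fin (l + 1) → ℕ,
    (∀ k, 1 ≤ a k) → (∀ k, a k ≤ b k) →
    (∀ k : Fin l, b k.castSucc < a k.succ ∧ b k.castSucc + N ≤ a k.succ) →
    ∀ p : ℕ, b (Fin.last l) + N ≤ p →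
      ∃ z : α, T^[p] z = z ∧
        ∀ k : Fin (l + 1), ∀ i : ℕ, a k ≤ i → i ≤ b k → d (T^[i] z) (T^[i] (x k)) < ε

/-- The length `ℓ` of a (possibly degenerate) interval. -/
noncomputable def intervalLen (I : Set ℝ) : ℝ := sSup I - sInf I

/-! ### Markov multi-maps -/

/-- A Markov multi-map of the interval, given by a tuple
`(P, A₀, A₁, A₂, D, R, {f_a})` as in the paper, together with the derived data
(inverse maps `g`, interiors `D0`, `R0`, graphs `Gr`, `G0`) which are uniquely
determined by the defining equations below. -/
structure MarkovMultiMap where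
  A : Type
  finA : Finite A
  A0 : Set A
  A1 : Set A
  A2 : Set A
  P : Finset ℝ
  D : A → Set ℝ
  R : A → Set ℝ
  f : A → ℝ → ℝ
  g : A → ℝ → ℝ
  D0 : A → Set ℝ
  R0 : A → Set ℝ
  Gr : A → Set (ℝ × ℝ)
  G0 : A → Set (ℝ × ℝ)
  P_zero : (0 : ℝ) ∈ P
  P_one : (1 : ℝ) ∈ P
  P_sub : (P : Set ℝ) ⊆ Set.Icc 0 1
  A_cover : ∀ a : A, a ∈ A0 ∨ a ∈ A1 ∨ a ∈ A2
  A01 : A0 ∩ A1 = ∅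
  A02 : A0 ∩ A2 = ∅
  A12 : A1 ∩ A2 = ∅
  D_A0 : ∀ a ∈ A0, ∃ p ∈ P, ∃ q ∈ P, p < q ∧ (∀ r ∈ P, ¬(p < r ∧ r < q)) ∧ D a = Set.Icc p q
  D_A12 : ∀ a ∈ A1 ∪ A2, ∃ p ∈ P, D a = {p}
  R_A0 : ∀ a ∈ A0, ∃ u ∈ P, ∃ v ∈ P, u < v ∧ R a = Set.Icc u v
  R_A1 : ∀ a ∈ A1, ∃ u ∈ P, ∃ v ∈ P, u < v ∧ R a = Set.Icc u v ∧
    Set.Icc u v ∩ (P : Set ℝ) = {u, v}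
  R_A2 : ∀ a ∈ A2, ∃ u ∈ P, R a = {u}
  f_homeo : ∀ a ∈ A0, ContinuousOn (f a) (D a) ∧ Set.BijOn (f a) (D a) (R a)
  g_A0 : ∀ a ∈ A0, (∀ x ∈ D a, g a (f a x) = x) ∧ ∀ y ∈ R a, g a y ∈ D a ∧ f a (g a y) = y
  g_A12 : ∀ a ∈ A1 ∪ A2, ∀ y ∈ R a, g a y ∈ D a
  cover : Set.Icc (0 : ℝ) 1 = ⋃ a : A, D a
  D0_A0 : ∀ a ∈ A0, D0 a = interior (D a)
  D0_A12 : ∀ a ∈ A1 ∪ A2, D0 a = D a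
  R0_A01 : ∀ a ∈ A0 ∪ A1, R0 a = interior (R a)
  R0_A2 : ∀ a ∈ A2, R0 a = R a
  Gr_A0 : ∀ a ∈ A0, Gr a = {q : ℝ × ℝ | q.1 ∈ D a ∧ q.2 = f a q.1}
  Gr_A12 : ∀ a ∈ A1 ∪ A2, Gr a = (D a) ×ˢ (R a)
  G0_A0 : ∀ a ∈ A0, G0 a = {q : ℝ × ℝ | q.1 ∈ D0 a ∧ q.2 = f a q.1}
  G0_A1 : ∀ a ∈ A1, G0 a = (D a) ×ˢ (R0 a)
  G0_A2 : ∀ a ∈ A2, G0 a = Gr a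

namespace MarkovMultiMap

variable (M : MarkovMultiMap)

/-- The graph `G(F)` of the multi-map. -/
def GF : Set (ℝ × ℝ) := ⋃ a : M.A, M.Gr a

/-- `F` is properly parametrized: the sets `G₀(a)` partition `G(F)`. -/
def ProperlyParametrized : Prop :=
  (⋃ a : M.A, M.G0 a) = M.GF ∧ ∀ a b : M.A, a ≠ b → Disjoint (M.G0 a) (M.G0 b)

/-- The forward trajectory space `X`. -/
def X : Set (ℕ → ℝ) :=
  {x | (∀ k, x k ∈ Set.Icc (0 : ℝ) 1) ∧ ∀ k, (x k, x (k + 1)) ∈ M.GF}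

/-- The left-shift map `T` on the forward trajectory space. -/
def shift : M.X → M.X :=
  fun x => ⟨fun k => x.1 (k + 1), ⟨fun k => x.2.1 (k + 1), fun k => x.2.2 (k + 1)⟩⟩

/-- The inverse trajectory (inverse limit) space `Y`, encoded by `y k = y_{-k}`. -/
def Y : Set (ℕ → ℝ) :=
  {y | (∀ k, y k ∈ Set.Icc (0 : ℝ) 1) ∧ ∀ k, (y (k + 1), y k) ∈ M.GF}

/-- The right-shift map `S` on the inverse limit space (in the encoding `y k = y_{-k}`). -/
def ishift : M.Y → M.Y :=
  fun y => ⟨fun k => y.1 (k + 1), ⟨fun k => y.2.1 (k + 1), fun k => y.2.2 (k + 1)⟩⟩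

/-- The space `X_n` of finite trajectories of length `n`. -/
def finTraj (n : ℕ) : Set (Fin n → ℝ) :=
  {x | (∀ i, x i ∈ Set.Icc (0 : ℝ) 1) ∧
    ∀ i : Fin n, ∀ h : (i : ℕ) + 1 < n, (x i, x ⟨(i : ℕ) + 1, h⟩) ∈ M.GF}

/-- The associated nearest-neighbor SFT `Σ_M`. -/
def SFT : Set (ℕ → M.A) := {a | ∀ n : ℕ, M.D0 (a (n + 1)) ⊆ M.R0 (a n)}

/-- The word `u` (of length `n`) occurs in some point of `Z`. -/
def WordIn {n : ℕ} (u : Fin n → M.A) (Z : Set (ℕ → M.A)) : Prop :=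
  ∃ z ∈ Z, ∃ m : ℕ, ∀ i : Fin n, u i = z (m + (i : ℕ))

/-- `L_n`, the words of length `n` in the language of `Σ_M`. -/
def Lang (n : ℕ) : Set (Fin n → M.A) := {u | M.WordIn u M.SFT}

/-- `(x,u)` is a labeled finite trajectory: `(x_k, x_{k+1}) ∈ G(u_k)` for all `k`. -/
def Labeled {n : ℕ} (x : Fin (n + 1) → ℝ) (u : Fin n → M.A) : Prop :=
  ∀ i : Fin n, (x i.castSucc, x i.succ) ∈ M.Gr (u i)

/-- `(x,u)` is a special labeled finite trajectory: `(x_k, x_{k+1}) ∈ G₀(u_k)` for all `k`. -/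
def SpecialLabeled {n : ℕ} (x : Fin (n + 1) → ℝ) (u : Fin n → M.A) : Prop :=
  ∀ i : Fin n, (x i.castSucc, x i.succ) ∈ M.G0 (u i)

/-- A word `u ∈ L_n` is essential if the set of finite trajectories specially labeled
by `u` is open in `X_{n+1}`. -/
def EssentialWord {n : ℕ} (u : Fin n → M.A) : Prop :=
  u ∈ M.Lang n ∧ IsOpen {x : M.finTraj (n + 1) | M.SpecialLabeled x.1 u}

/-- A symbol is essential if it appears in some essential word. -/
def EssentialSymbol (a : M.A) : Prop :=
  ∃ n : ℕ, ∃ u : Fin n → M.A, M.EssentialWord u ∧ ∃ i : Fin n, u i = a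

/-- `A^(e)`, the set of essential symbols. -/
def Ess : Set M.A := {a | M.EssentialSymbol a}

/-- `E`, the set of essential symbolic sequences. -/
def E : Set (ℕ → M.A) := {z ∈ M.SFT | ∀ i : ℕ, z i ∈ M.Ess}

/-- A word all of whose letters lie in `C`, in the language of `Σ_M`. -/
def WordOver {n : ℕ} (u : Fin n → M.A) (C : Set M.A) : Prop :=
  u ∈ M.Lang n ∧ ∀ i, u i ∈ C

/-- There is a word of length `n+1` over `C` beginning with `a` and ending with `b`. -/
def WordFromTo (C : Set M.A) (a b : M.A) (n : ℕ) : Prop :=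
  ∃ u : Fin (n + 1) → M.A, M.WordOver u C ∧ u 0 = a ∧ u (Fin.last n) = b

/-- `C ⊆ A` is irreducible. -/
def IrreducibleSet (C : Set M.A) : Prop :=
  ∀ a ∈ C, ∀ b ∈ C, ∃ n : ℕ, M.WordFromTo C a b n

/-- `C` is an irreducible component (a maximal irreducible subset of `A`). -/
def IrreducibleComponent (C : Set M.A) : Prop :=
  M.IrreducibleSet C ∧ ∀ C' : Set M.A, M.IrreducibleSet C' → C ⊆ C' → C' = C

/-- `C ⊆ A` is mixing. -/
def MixingSet (C : Set M.A) : Prop :=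
  ∃ N : ℕ, 1 ≤ N ∧ ∀ a ∈ C, ∀ b ∈ C, ∀ n : ℕ, N ≤ n + 1 → M.WordFromTo C a b n

/-- `C` is a mixing component (a maximal mixing subset of `A`). -/
def MixingComponent (C : Set M.A) : Prop :=
  M.MixingSet C ∧ ∀ C' : Set M.A, M.MixingSet C' → C ⊆ C' → C' = C

/-- The Irreducibility Condition (IC). -/
def IC : Prop := ∃ C : Set M.A, M.IrreducibleComponent C ∧ M.Ess ⊆ C

/-- The Mixing Condition (MC). -/
def MC : Prop := ∃ C : Set M.A, M.MixingComponent C ∧ M.Ess ⊆ C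

/-- `Z` is a subshift of `Σ_M`: shift-invariant and closed in the product of discrete
topologies (closedness phrased combinatorially). -/
def IsSubshift (Z : Set (ℕ → M.A)) : Prop :=
  Z ⊆ M.SFT ∧ (∀ z ∈ Z, (fun k => z (k + 1)) ∈ Z) ∧
  ∀ x : ℕ → M.A, (∀ n : ℕ, ∃ z ∈ Z, ∀ i, i < n → z i = x i) → x ∈ Z

/-- The symbol `a` occurs in some point of `Z`. -/
def SymbolInShift (Z : Set (ℕ → M.A)) (a : M.A) : Prop := ∃ z ∈ Z, ∃ k : ℕ, z k = a

/-- `Z` is transitive on symbols. -/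
def TransitiveOnSymbols (Z : Set (ℕ → M.A)) : Prop :=
  ∀ a b : M.A, M.SymbolInShift Z a → M.SymbolInShift Z b →
    ∃ z ∈ Z, ∃ m n : ℕ, z m = a ∧ z (m + n) = b

end MarkovMultiMap

/-- The composition `g_{u₀} ∘ ⋯ ∘ g_{u_n}` of inverse maps along a list of symbols. -/
def gWordList (M : MarkovMultiMap) : List M.A → ℝ → ℝ
  | [], x => x
  | a :: l, x => M.g a (gWordList M l x)

namespace MarkovMultiMap

/-- The inverse map `g_u` associated to a word `u = u₀⋯u_n`. -/
def gWord (M : MarkovMultiMap) {n : ℕ} (u : Fin (n + 1) → M.A) : ℝ → ℝ :=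
  gWordList M (List.ofFn u)

/-- The interval `I_u = g_u(R(u_n))`. -/
def Iword (M : MarkovMultiMap) {n : ℕ} (u : Fin (n + 1) → M.A) : Set ℝ :=
  M.gWord u '' M.R (u (Fin.last n))

/-- The Coding Condition (CC). -/
def CC (M : MarkovMultiMap) : Prop :=
  ∃ Z : Set (ℕ → M.A), M.IsSubshift Z ∧ M.TransitiveOnSymbols Z ∧
    (∀ y ∈ Set.Icc (0 : ℝ) 1, ∃ a ∈ Z, ∃ x ∈ M.X, x 0 = y ∧
      ∀ i : ℕ, (x i, x (i + 1)) ∈ M.Gr (a i)) ∧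
    (∀ ε : ℝ, 0 < ε → ∃ N : ℕ, ∀ n : ℕ, N ≤ n → ∀ u : Fin (n + 1) → M.A,
      M.WordIn u Z → intervalLen (M.Iword u) < ε)

/-- Uniform equicontinuity of the family `{g_u : u ∈ L(C)}`. -/
def UnifEquicontOn (M : MarkovMultiMap) (C : Set M.A) : Prop :=
  ∀ ε : ℝ, 0 < ε → ∃ δ : ℝ, 0 < δ ∧ ∀ n : ℕ, ∀ u : Fin (n + 1) → M.A, M.WordOver u C →
    ∀ x ∈ M.R (u (Fin.last n)), ∀ y ∈ M.R (u (Fin.last n)),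
      |x - y| < δ → |M.gWord u x - M.gWord u y| < ε

end MarkovMultiMap

/-! ### Auxiliary general lemmas -/

section AuxGeneral

lemma mm_finmin {ι : Type} [Finite ι] (g : ι → ℝ) (h : ∀ i, 0 < g i) :
    ∃ ε : ℝ, 0 < ε ∧ ∀ i, ε ≤ g i := by
  classical
  cases isEmpty_or_nonempty ι with
  | inl hempty => exact ⟨1, one_pos, fun i => (IsEmpty.false i).elim⟩
  | inr hne =>
    haveI := Fintype.ofFinite ι
    obtain ⟨i0, -, hmin⟩ := Finset.exists_min_image Finset.univ g
      ⟨Classical.arbitrary ι, Finset.mem_univ _⟩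
    exact ⟨g i0, h i0, fun i => hmin i (Finset.mem_univ i)⟩

lemma mm_finmin' {ι : Type} [Finite ι] (Q : ι → Prop) (B : ι → ℝ → Prop)
    (mono : ∀ i ε ε', 0 < ε' → ε' ≤ ε → B i ε → B i ε')
    (h : ∀ i, Q i → ∃ ε, 0 < ε ∧ B i ε) :
    ∃ ε, 0 < ε ∧ ∀ i, Q i → B i ε := by
  classical
  obtain ⟨ε, hε, hle⟩ := mm_finmin (fun i => if hq : Q i then (h i hq).choose else 1)
    (fun i => by
      show 0 < (if hq : Q i then (h i hq).choose else 1)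
      split
      · exact (h i ‹_›).choose_spec.1
      · exact one_pos)
  refine ⟨ε, hε, fun i hq => ?_⟩
  have hh := hle i
  rw [dif_pos hq] at hh
  exact mono i _ _ hε hh (h i hq).choose_spec.2

lemma mm_sep {C : Set ℝ} (hC : IsClosed C) {t : ℝ} (h : t ∉ C) :
    ∃ ε, 0 < ε ∧ ∀ u, |u - t| < ε → u ∉ C := by
  obtain ⟨ε, hε, hball⟩ := Metric.isOpen_iff.1 hC.isOpen_compl t h
  exact ⟨ε, hε, fun u hu => hball (by rw [Metric.mem_ball, Real.dist_eq]; exact hu)⟩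

open Filter in
lemma mm_diag {A : Type} [Finite A] [Nonempty A] (F : ℕ → ℕ → A) :
    ∃ e : ℕ → A, ∀ n : ℕ, ∃ m, n ≤ m ∧ ∀ i, i < n → e i = F m i := by
  classical
  haveI : (Filter.atTop : Filter ℕ).NeBot := Filter.atTop_neBot
  set U : Ultrafilter ℕ := Ultrafilter.of Filter.atTop with hU
  have hle : (U : Filter ℕ) ≤ Filter.atTop := Ultrafilter.of_le _
  have hex : ∀ i : ℕ, ∃ a : A, {m | F m i = a} ∈ U := by
    intro i
    by_contra hcon
    push_neg at hcon
    have h2 : ∀ a : A, {m | F m i = a}ᶜ ∈ U := fun a =>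
      (Ultrafilter.compl_mem_iff_notMem).2 (hcon a)
    have h3 : (⋂ a : A, {m | F m i = a}ᶜ) ∈ (U : Filter ℕ) :=
      Filter.iInter_mem.2 (fun a => Ultrafilter.mem_coe.2 (h2 a))
    have h4 : (⋂ a : A, {m | F m i = a}ᶜ) = ∅ := by
      ext m; simp
    rw [h4] at h3
    exact Filter.empty_notMem (U : Filter ℕ) h3
  choose e he using hex
  refine ⟨e, fun n => ?_⟩
  have hs : {m | n ≤ m} ∈ U := hle (Filter.mem_atTop n)
  have h5 : (⋂ i ∈ Finset.range n, {m | F m i = e i}) ∈ (U : Filter ℕ) :=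
    (Filter.biInter_mem (Finset.range n).finite_toSet).2
      (fun i _ => Ultrafilter.mem_coe.2 (he i))
  have h6 : ({m | n ≤ m} ∩ ⋂ i ∈ Finset.range n, {m | F m i = e i}).Nonempty :=
    Filter.nonempty_of_mem (Filter.inter_mem hs h5)
  obtain ⟨m, hm1, hm2⟩ := h6
  refine ⟨m, hm1, fun i hi => ?_⟩
  have := Set.mem_iInter₂.1 hm2 i (Finset.mem_range.2 hi)
  exact this.symm

end AuxGeneral

/-! ### Basic structure lemmas -/

namespace MarkovMultiMap

variable (M : MarkovMultiMap)

/-- `p` and `q` are adjacent partition points. -/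
def Adj (p q : ℝ) : Prop :=
  p ∈ M.P ∧ q ∈ M.P ∧ p < q ∧ ∀ r ∈ M.P, ¬(p < r ∧ r < q)

lemma A0_D {a : M.A} (ha : a ∈ M.A0) : ∃ p q, M.Adj p q ∧ M.D a = Set.Icc p q := by
  obtain ⟨p, hp, q, hq, hpq, hadj, hD⟩ := M.D_A0 a ha
  exact ⟨p, q, ⟨hp, hq, hpq, hadj⟩, hD⟩

lemma A0_R {a : M.A} (ha : a ∈ M.A0) :
    ∃ u v, u ∈ M.P ∧ v ∈ M.P ∧ u < v ∧ M.R a = Set.Icc u v := by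
  obtain ⟨u, hu, v, hv, huv, hR⟩ := M.R_A0 a ha
  exact ⟨u, v, hu, hv, huv, hR⟩

lemma A1_R {a : M.A} (ha : a ∈ M.A1) :
    ∃ u v, u ∈ M.P ∧ v ∈ M.P ∧ u < v ∧ M.R a = Set.Icc u v ∧
      Set.Icc u v ∩ (M.P : Set ℝ) = {u, v} := by
  obtain ⟨u, hu, v, hv, huv, hR, hint⟩ := M.R_A1 a ha
  exact ⟨u, v, hu, hv, huv, hR, hint⟩

lemma A01_R {a : M.A} (ha : a ∈ M.A0 ∪ M.A1) :
    ∃ u v, u ∈ M.P ∧ v ∈ M.P ∧ u < v ∧ M.R a = Set.Icc u v := by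
  rcases ha with h | h
  · exact M.A0_R h
  · obtain ⟨u, v, hu, hv, huv, hR, -⟩ := M.A1_R h
    exact ⟨u, v, hu, hv, huv, hR⟩

lemma A12_D {a : M.A} (ha : a ∈ M.A1 ∪ M.A2) : ∃ p, p ∈ M.P ∧ M.D a = {p} := by
  obtain ⟨p, hp, hD⟩ := M.D_A12 a ha
  exact ⟨p, hp, hD⟩

lemma A2_R {a : M.A} (ha : a ∈ M.A2) : ∃ w, w ∈ M.P ∧ M.R a = {w} := by
  obtain ⟨w, hw, hR⟩ := M.R_A2 a ha
  exact ⟨w, hw, hR⟩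

lemma adj_subset {p q u v t : ℝ} (h : M.Adj p q) (hu : u ∈ M.P) (hv : v ∈ M.P)
    (ht1 : t ∈ Set.Icc p q) (ht2 : t ∈ Set.Ioo u v) : Set.Icc p q ⊆ Set.Icc u v := by
  obtain ⟨hp, hq, hpq, hadj⟩ := h
  have h1 : u ≤ p := by
    by_contra hc
    push_neg at hc
    exact hadj u hu ⟨hc, lt_of_lt_of_le ht2.1 ht1.2⟩
  have h2 : q ≤ v := by
    by_contra hc
    push_neg at hc
    exact hadj v hv ⟨lt_of_le_of_lt ht1.1 ht2.2, hc⟩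
  exact Set.Icc_subset_Icc h1 h2

lemma adj_not_P {p q t : ℝ} (h : M.Adj p q) (ht : t ∈ Set.Ioo p q) : t ∉ (M.P : Set ℝ) := by
  intro htP
  exact h.2.2.2 t htP ⟨ht.1, ht.2⟩

lemma D_closed (a : M.A) : IsClosed (M.D a) := by
  rcases M.A_cover a with h | h | h
  · obtain ⟨p, q, -, hD⟩ := M.A0_D h
    rw [hD]; exact isClosed_Icc
  · obtain ⟨p, -, hD⟩ := M.A12_D (Set.mem_union_left _ h)
    rw [hD]; exact isClosed_singleton
  · obtain ⟨p, -, hD⟩ := M.A12_D (Set.mem_union_right _ h)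
    rw [hD]; exact isClosed_singleton

lemma R_closed (a : M.A) : IsClosed (M.R a) := by
  rcases M.A_cover a with h | h | h
  · obtain ⟨u, v, -, -, -, hR⟩ := M.A0_R h
    rw [hR]; exact isClosed_Icc
  · obtain ⟨u, v, -, -, -, hR, -⟩ := M.A1_R h
    rw [hR]; exact isClosed_Icc
  · obtain ⟨w, -, hR⟩ := M.A2_R h
    rw [hR]; exact isClosed_singleton

lemma P_closed : IsClosed (M.P : Set ℝ) := (M.P).finite_toSet.isClosed

lemma P_gap : ∃ γ, 0 < γ ∧ ∀ p ∈ M.P, ∀ q ∈ M.P, p ≠ q → γ ≤ |p - q| := by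
  obtain ⟨γ, hγ, hle⟩ := mm_finmin' (ι := (↥M.P) × (↥M.P))
    (fun z => (z.1 : ℝ) ≠ (z.2 : ℝ)) (fun z ε => ε ≤ |(z.1 : ℝ) - (z.2 : ℝ)|)
    (fun i ε ε' _ hle hB => le_trans hle hB)
    (fun i hQ => ⟨|(i.1 : ℝ) - (i.2 : ℝ)|, abs_pos.2 (sub_ne_zero.2 hQ), le_refl _⟩)
  exact ⟨γ, hγ, fun p hp q hq hne => hle (⟨p, hp⟩, ⟨q, hq⟩) hne⟩

end MarkovMultiMap
namespace MarkovMultiMap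

variable (M : MarkovMultiMap)

lemma f_contOn {a : M.A} (ha : a ∈ M.A0) : ContinuousOn (M.f a) (M.D a) :=
  (M.f_homeo a ha).1

lemma f_injOn {a : M.A} (ha : a ∈ M.A0) : Set.InjOn (M.f a) (M.D a) :=
  (M.f_homeo a ha).2.injOn

lemma f_mapsTo {a : M.A} (ha : a ∈ M.A0) : Set.MapsTo (M.f a) (M.D a) (M.R a) :=
  (M.f_homeo a ha).2.mapsTo

lemma f_surjOn {a : M.A} (ha : a ∈ M.A0) : Set.SurjOn (M.f a) (M.D a) (M.R a) :=
  (M.f_homeo a ha).2.surjOn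

lemma f_mem_interior {a : M.A} (ha : a ∈ M.A0) {s : ℝ} (hs : s ∈ interior (M.D a)) :
    M.f a s ∈ interior (M.R a) := by
  obtain ⟨p, q, hadj, hD⟩ := M.A0_D ha
  obtain ⟨u, v, hu, hv, huv, hR⟩ := M.A0_R ha
  have hpq : p < q := hadj.2.2.1
  rw [hD, interior_Icc] at hs
  rw [hR, interior_Icc]
  have hcont : ContinuousOn (M.f a) (Set.Icc p q) := by
    have := M.f_contOn ha; rwa [hD] at this
  have hinj : Set.InjOn (M.f a) (Set.Icc p q) := by
    have := M.f_injOn ha; rwa [hD] at this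
  have hmaps : Set.MapsTo (M.f a) (Set.Icc p q) (Set.Icc u v) := by
    have := M.f_mapsTo ha; rwa [hD, hR] at this
  have hsI : s ∈ Set.Icc p q := Set.Ioo_subset_Icc_self hs
  have hmem : M.f a s ∈ Set.Icc u v := hmaps hsI
  have hpI : p ∈ Set.Icc p q := Set.left_mem_Icc.2 hpq.le
  have hqI : q ∈ Set.Icc p q := Set.right_mem_Icc.2 hpq.le
  have hfp : M.f a p ∈ Set.Icc u v := hmaps hpI
  have hfq : M.f a q ∈ Set.Icc u v := hmaps hqI
  have hps : p ≠ s := fun h => (lt_irrefl p (h ▸ hs.1)).elim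
  have hqs : q ≠ s := fun h => (lt_irrefl q (h ▸ hs.2)).elim
  constructor
  · -- f a s ≠ u
    rcases lt_or_eq_of_le hmem.1 with h | h
    · exact h
    exfalso
    have hfpu : u < M.f a p := by
      rcases lt_or_eq_of_le hfp.1 with h' | h'
      · exact h'
      · exact absurd (hinj hpI hsI (h'.symm.trans h)) hps
    have hfqu : u < M.f a q := by
      rcases lt_or_eq_of_le hfq.1 with h' | h'
      · exact h'
      · exact absurd (hinj hqI hsI (h'.symm.trans h)) hqs
    set y := (u + min (M.f a p) (M.f a q)) / 2 with hy
    have hy1 : u < y := by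
      have : u < min (M.f a p) (M.f a q) := lt_min hfpu hfqu
      simp only [hy]; linarith
    have hy2 : y < min (M.f a p) (M.f a q) := by
      have : u < min (M.f a p) (M.f a q) := lt_min hfpu hfqu
      simp only [hy]; linarith
    have hz1 : y ∈ M.f a '' Set.Ioo p s := by
      apply intermediate_value_Ioo' hs.1.le (hcont.mono (Set.Icc_subset_Icc le_rfl hsI.2))
      exact ⟨h ▸ hy1, lt_of_lt_of_le hy2 (min_le_left _ _)⟩
    have hz2 : y ∈ M.f a '' Set.Ioo s q := by
      apply intermediate_value_Ioo hs.2.le (hcont.mono (Set.Icc_subset_Icc hsI.1 le_rfl))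
      exact ⟨h ▸ hy1, lt_of_lt_of_le hy2 (min_le_right _ _)⟩
    obtain ⟨z1, hz1m, hz1e⟩ := hz1
    obtain ⟨z2, hz2m, hz2e⟩ := hz2
    have hzz : z1 = z2 := hinj
      ⟨hz1m.1.le, le_trans hz1m.2.le hsI.2⟩ ⟨le_trans hsI.1 hz2m.1.le, hz2m.2.le⟩
      (hz1e.trans hz2e.symm)
    exact absurd (hzz ▸ hz2m.1) (not_lt.2 hz1m.2.le)
  · -- f a s ≠ v
    rcases lt_or_eq_of_le hmem.2 with h | h
    · exact h
    exfalso
    have hfpv : M.f a p < v := by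
      rcases lt_or_eq_of_le hfp.2 with h' | h'
      · exact h'
      · exact absurd (hinj hpI hsI (h'.trans h.symm)) hps
    have hfqv : M.f a q < v := by
      rcases lt_or_eq_of_le hfq.2 with h' | h'
      · exact h'
      · exact absurd (hinj hqI hsI (h'.trans h.symm)) hqs
    set y := (max (M.f a p) (M.f a q) + v) / 2 with hy
    have hy1 : max (M.f a p) (M.f a q) < y := by
      have : max (M.f a p) (M.f a q) < v := max_lt hfpv hfqv
      simp only [hy]; linarith
    have hy2 : y < v := by
      have : max (M.f a p) (M.f a q) < v := max_lt hfpv hfqv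
      simp only [hy]; linarith
    have hz1 : y ∈ M.f a '' Set.Ioo p s := by
      apply intermediate_value_Ioo hs.1.le (hcont.mono (Set.Icc_subset_Icc le_rfl hsI.2))
      exact ⟨lt_of_le_of_lt (le_max_left _ _) hy1, h ▸ hy2⟩
    have hz2 : y ∈ M.f a '' Set.Ioo s q := by
      apply intermediate_value_Ioo' hs.2.le (hcont.mono (Set.Icc_subset_Icc hsI.1 le_rfl))
      exact ⟨lt_of_le_of_lt (le_max_right _ _) hy1, h ▸ hy2⟩
    obtain ⟨z1, hz1m, hz1e⟩ := hz1
    obtain ⟨z2, hz2m, hz2e⟩ := hz2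
    have hzz : z1 = z2 := hinj
      ⟨hz1m.1.le, le_trans hz1m.2.le hsI.2⟩ ⟨le_trans hsI.1 hz2m.1.le, hz2m.2.le⟩
      (hz1e.trans hz2e.symm)
    exact absurd (hzz ▸ hz2m.1) (not_lt.2 hz1m.2.le)

lemma f_endpoint_mem_P {a : M.A} (ha : a ∈ M.A0) {s : ℝ} (hs : s ∈ M.D a)
    (hsP : s ∈ M.P) : M.f a s ∈ M.P := by
  obtain ⟨p, q, hadj, hD⟩ := M.A0_D ha
  obtain ⟨u, v, hu, hv, huv, hR⟩ := M.A0_R ha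
  have hpq : p < q := hadj.2.2.1
  have hcont : ContinuousOn (M.f a) (Set.Icc p q) := by
    have := M.f_contOn ha; rwa [hD] at this
  have hinj : Set.InjOn (M.f a) (Set.Icc p q) := by
    have := M.f_injOn ha; rwa [hD] at this
  have hmaps : Set.MapsTo (M.f a) (Set.Icc p q) (Set.Icc u v) := by
    have := M.f_mapsTo ha; rwa [hD, hR] at this
  have hsurj : Set.SurjOn (M.f a) (Set.Icc p q) (Set.Icc u v) := by
    have := M.f_surjOn ha; rwa [hD, hR] at this
  rw [hD] at hs
  have hend : s = p ∨ s = q := by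
    rcases eq_or_lt_of_le hs.1 with h | h
    · exact Or.inl h.symm
    rcases eq_or_lt_of_le hs.2 with h' | h'
    · exact Or.inr h'
    · exact absurd hsP (M.adj_not_P hadj ⟨h, h'⟩)
  have hnotI : M.f a s ∉ Set.Ioo u v := by
    intro hI
    obtain ⟨zu, hzu, hfzu⟩ := hsurj (Set.left_mem_Icc.2 huv.le)
    obtain ⟨zv, hzv, hfzv⟩ := hsurj (Set.right_mem_Icc.2 huv.le)
    have hzus : zu ≠ s := fun h => by
      rw [h] at hfzu; rw [hfzu] at hI; exact lt_irrefl u hI.1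
    have hzvs : zv ≠ s := fun h => by
      rw [h] at hfzv; rw [hfzv] at hI; exact lt_irrefl v hI.2
    rcases lt_trichotomy zu zv with hlt | heq | hgt
    · have : M.f a s ∈ M.f a '' Set.Ioo zu zv := by
        apply intermediate_value_Ioo hlt.le (hcont.mono (Set.Icc_subset_Icc hzu.1 hzv.2))
        rw [hfzu, hfzv]; exact hI
      obtain ⟨z, hzm, hze⟩ := this
      have hzIcc : z ∈ Set.Icc p q := ⟨le_trans hzu.1 hzm.1.le, le_trans hzm.2.le hzv.2⟩
      have hzs : z = s := hinj hzIcc hs hze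
      rcases hend with h | h
      · -- s = p : z > zu ≥ p = s
        have : p < z := lt_of_le_of_lt hzu.1 hzm.1
        rw [hzs, h] at this; exact lt_irrefl _ this
      · have : z < q := lt_of_lt_of_le hzm.2 hzv.2
        rw [hzs, h] at this; exact lt_irrefl _ this
    · rw [heq, hfzv] at hfzu; exact absurd hfzu.symm (ne_of_lt huv)
    · have : M.f a s ∈ M.f a '' Set.Ioo zv zu := by
        apply intermediate_value_Ioo' hgt.le (hcont.mono (Set.Icc_subset_Icc hzv.1 hzu.2))
        rw [hfzu, hfzv]; exact hI
      obtain ⟨z, hzm, hze⟩ := this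
      have hzIcc : z ∈ Set.Icc p q := ⟨le_trans hzv.1 hzm.1.le, le_trans hzm.2.le hzu.2⟩
      have hzs : z = s := hinj hzIcc hs hze
      rcases hend with h | h
      · have : p < z := lt_of_le_of_lt hzv.1 hzm.1
        rw [hzs, h] at this; exact lt_irrefl _ this
      · have : z < q := lt_of_lt_of_le hzm.2 hzu.2
        rw [hzs, h] at this; exact lt_irrefl _ this
  have hmem : M.f a s ∈ Set.Icc u v := hmaps hs
  have : M.f a s = u ∨ M.f a s = v := by
    rcases eq_or_lt_of_le hmem.1 with h | h
    · exact Or.inl h.symm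
    rcases eq_or_lt_of_le hmem.2 with h' | h'
    · exact Or.inr h'
    · exact absurd ⟨h, h'⟩ hnotI
  rcases this with h | h
  · rw [h]; exact hu
  · rw [h]; exact hv

lemma f_uc {ε : ℝ} (hε : 0 < ε) :
    ∃ δ, 0 < δ ∧ ∀ a ∈ M.A0, ∀ s ∈ M.D a, ∀ t ∈ M.D a,
      |s - t| < δ → |M.f a s - M.f a t| < ε := by
  haveI := M.finA
  obtain ⟨δ, hδ, hle⟩ := mm_finmin' (ι := M.A) (fun a => a ∈ M.A0)
    (fun a δ => ∀ s ∈ M.D a, ∀ t ∈ M.D a, |s - t| < δ → |M.f a s - M.f a t| < ε)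
    (fun a δ δ' _ hled hB s hs t ht hst => hB s hs t ht (lt_of_lt_of_le hst hled))
    (fun a ha => by
      obtain ⟨p, q, hadj, hD⟩ := M.A0_D ha
      have hcomp : IsCompact (M.D a) := by rw [hD]; exact isCompact_Icc
      have huc := hcomp.uniformContinuousOn_of_continuous (M.f_contOn ha)
      obtain ⟨δ, hδ, hprop⟩ := Metric.uniformContinuousOn_iff.1 huc ε hε
      refine ⟨δ, hδ, fun s hs t ht hst => ?_⟩
      have := hprop s hs t ht (by rwa [Real.dist_eq])
      rwa [Real.dist_eq] at this)
  exact ⟨δ, hδ, fun a ha s hs t ht hst => hle a ha s hs t ht hst⟩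

/-! ### Membership lemmas for graphs -/

lemma GF_cases {s t : ℝ} (h : (s, t) ∈ M.GF) :
    ∃ a, (a ∈ M.A0 ∧ s ∈ M.D a ∧ t = M.f a s) ∨
      ((a ∈ M.A1 ∪ M.A2) ∧ M.D a = {s} ∧ t ∈ M.R a) := by
  obtain ⟨S, ⟨a, rfl⟩, hmem⟩ := h
  have hmem : (s, t) ∈ M.Gr a := hmem
  refine ⟨a, ?_⟩
  rcases M.A_cover a with h0 | h1 | h2
  · left
    rw [M.Gr_A0 a h0] at hmem
    exact ⟨h0, hmem.1, hmem.2⟩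
  · right
    have hu : a ∈ M.A1 ∪ M.A2 := Set.mem_union_left _ h1
    rw [M.Gr_A12 a hu] at hmem
    obtain ⟨p, hp, hD⟩ := M.A12_D hu
    have : s = p := by have := hmem.1; rw [hD] at this; exact this
    exact ⟨hu, by rw [hD, this], hmem.2⟩
  · right
    have hu : a ∈ M.A1 ∪ M.A2 := Set.mem_union_right _ h2
    rw [M.Gr_A12 a hu] at hmem
    obtain ⟨p, hp, hD⟩ := M.A12_D hu
    have : s = p := by have := hmem.1; rw [hD] at this; exact this
    exact ⟨hu, by rw [hD, this], hmem.2⟩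

lemma A0_pair {a : M.A} (ha : a ∈ M.A0) {s t : ℝ} (h : (s, t) ∈ M.G0 a) :
    s ∈ interior (M.D a) ∧ t = M.f a s := by
  rw [M.G0_A0 a ha] at h
  exact ⟨by rw [← M.D0_A0 a ha]; exact h.1, h.2⟩

lemma A1_pair {a : M.A} (ha : a ∈ M.A1) {s t : ℝ} (h : (s, t) ∈ M.G0 a) :
    M.D a = {s} ∧ s ∈ M.P ∧ t ∈ interior (M.R a) := by
  rw [M.G0_A1 a ha] at h
  obtain ⟨p, hp, hD⟩ := M.A12_D (Set.mem_union_left _ ha)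
  have hs : s = p := by have := h.1; rw [hD] at this; exact this
  refine ⟨by rw [hD, hs], hs ▸ hp, ?_⟩
  have := h.2
  rwa [M.R0_A01 a (Set.mem_union_right _ ha)] at this

lemma A2_pair {a : M.A} (ha : a ∈ M.A2) {s t : ℝ} (h : (s, t) ∈ M.G0 a) :
    M.D a = {s} ∧ M.R a = {t} ∧ s ∈ M.P ∧ t ∈ M.P := by
  rw [M.G0_A2 a ha, M.Gr_A12 a (Set.mem_union_right _ ha)] at h
  obtain ⟨p, hp, hD⟩ := M.A12_D (Set.mem_union_right _ ha)
  obtain ⟨w, hw, hR⟩ := M.A2_R ha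
  have hs : s = p := by have := h.1; rw [hD] at this; exact this
  have ht : t = w := by have := h.2; rw [hR] at this; exact this
  exact ⟨by rw [hD, hs], by rw [hR, ht], hs ▸ hp, ht ▸ hw⟩

lemma G0_sub_Gr (a : M.A) : M.G0 a ⊆ M.Gr a := by
  rcases M.A_cover a with h0 | h1 | h2
  · rw [M.G0_A0 a h0, M.Gr_A0 a h0]
    intro z hz
    exact ⟨by rw [M.D0_A0 a h0] at hz; exact interior_subset hz.1, hz.2⟩
  · rw [M.G0_A1 a h1, M.Gr_A12 a (Set.mem_union_left _ h1)]
    apply Set.prod_mono_right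
    rw [M.R0_A01 a (Set.mem_union_right _ h1)]
    exact interior_subset
  · rw [M.G0_A2 a h2]

lemma after_A2 {a a' : M.A} (ha : a ∈ M.A2) {s t t' : ℝ} (h : (s, t) ∈ M.G0 a)
    (h' : (t, t') ∈ M.G0 a') : a' ∈ M.A1 ∪ M.A2 := by
  obtain ⟨-, -, -, htP⟩ := M.A2_pair ha h
  rcases M.A_cover a' with h0 | h1 | h2
  · exfalso
    obtain ⟨ht, -⟩ := M.A0_pair h0 h'
    obtain ⟨p, q, hadj, hD⟩ := M.A0_D h0
    rw [hD, interior_Icc] at ht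
    exact M.adj_not_P hadj ht htP
  · exact Set.mem_union_left _ h1
  · exact Set.mem_union_right _ h2

end MarkovMultiMap
namespace MarkovMultiMap

variable (M : MarkovMultiMap)

lemma D0_sub_R0 {a' a : M.A} (ha' : a' ∈ M.A0) (ha : a ∈ M.A0 ∪ M.A1)
    (h : M.D a' ⊆ M.R a) : M.D0 a' ⊆ M.R0 a := by
  rw [M.D0_A0 a' ha', M.R0_A01 a ha]
  exact interior_mono h

lemma D_sub_R_of_mem {a' a : M.A} (ha' : a' ∈ M.A0) (ha : a ∈ M.A0 ∪ M.A1) {t : ℝ}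
    (ht' : t ∈ M.D a') (ht : t ∈ interior (M.R a)) : M.D a' ⊆ M.R a := by
  obtain ⟨p, q, hadj, hD⟩ := M.A0_D ha'
  obtain ⟨u, v, hu, hv, huv, hR⟩ := M.A01_R ha
  rw [hR, interior_Icc] at ht
  rw [hD] at ht' ⊢
  rw [hR]
  exact M.adj_subset hadj hu hv ht' ht

lemma snd_mem_int {a : M.A} (ha : a ∈ M.A0 ∪ M.A1) {s t : ℝ} (h : (s, t) ∈ M.G0 a) :
    t ∈ interior (M.R a) := by
  rcases ha with h0 | h1
  · obtain ⟨hs, ht⟩ := M.A0_pair h0 h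
    rw [ht]
    exact M.f_mem_interior h0 hs
  · exact (M.A1_pair h1 h).2.2

lemma label_SFT {x : ℕ → ℝ} {b : ℕ → M.A} (hb : ∀ k, (x k, x (k+1)) ∈ M.G0 (b k)) :
    b ∈ M.SFT := by
  intro k
  rcases M.A_cover (b k) with h0 | h1 | h2
  case _ | _ =>
    first
    | (have hk : b k ∈ M.A0 ∪ M.A1 := Set.mem_union_left _ h0)
    | (have hk : b k ∈ M.A0 ∪ M.A1 := Set.mem_union_right _ h1)
    all_goals
    have hx1 : x (k+1) ∈ interior (M.R (b k)) := M.snd_mem_int hk (hb k)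
    rcases M.A_cover (b (k+1)) with g0 | g1 | g2
    · have hmem : x (k+1) ∈ M.D (b (k+1)) :=
        interior_subset (M.A0_pair g0 (hb (k+1))).1
      exact M.D0_sub_R0 g0 hk (M.D_sub_R_of_mem g0 hk hmem hx1)
    · have hD := (M.A1_pair g1 (hb (k+1))).1
      rw [M.D0_A12 (b (k+1)) (Set.mem_union_left _ g1), hD,
        M.R0_A01 (b k) hk]
      exact Set.singleton_subset_iff.2 hx1
    · have hD := (M.A2_pair g2 (hb (k+1))).1
      rw [M.D0_A12 (b (k+1)) (Set.mem_union_right _ g2), hD,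
        M.R0_A01 (b k) hk]
      exact Set.singleton_subset_iff.2 hx1
  case _ =>
    have hR : M.R (b k) = {x (k+1)} := (M.A2_pair h2 (hb k)).2.1
    have hnext : b (k+1) ∈ M.A1 ∪ M.A2 := M.after_A2 h2 (hb k) (hb (k+1))
    have hD : M.D (b (k+1)) = {x (k+1)} := by
      rcases hnext with g1 | g2
      · exact (M.A1_pair g1 (hb (k+1))).1
      · exact (M.A2_pair g2 (hb (k+1))).1
    rw [M.D0_A12 (b (k+1)) hnext, hD, M.R0_A2 (b k) h2, hR]

lemma exists_next {a : M.A} (ha : a ∈ M.A0 ∪ M.A1) :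
    ∃ a', (a' ∈ M.A0 ∪ M.A1) ∧ M.D0 a' ⊆ M.R0 a := by
  obtain ⟨u, v, hu, hv, huv, hR⟩ := M.A01_R ha
  have hvc : v ∈ M.P.filter (fun r => u < r ∧ r ≤ v) :=
    Finset.mem_filter.2 ⟨hv, huv, le_rfl⟩
  set cand := M.P.filter (fun r => u < r ∧ r ≤ v) with hcand
  have hne : cand.Nonempty := ⟨v, hvc⟩
  set u₂ := cand.min' hne with hu₂def
  have hu₂mem := cand.min'_mem hne
  rw [Finset.mem_filter] at hu₂mem
  obtain ⟨hu₂P, hu₂gt, hu₂le⟩ := hu₂mem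
  set t := (u + u₂) / 2 with htdef
  have ht1 : u < t := by simp only [htdef]; linarith
  have ht2 : t < u₂ := by simp only [htdef]; linarith
  have htP : t ∉ M.P := by
    intro hmem
    have : u₂ ≤ t := cand.min'_le t (Finset.mem_filter.2 ⟨hmem, ht1, le_trans ht2.le hu₂le⟩)
    exact absurd this (not_le.2 ht2)
  have ht01 : t ∈ Set.Icc (0:ℝ) 1 := by
    have h1 := M.P_sub (Finset.mem_coe.2 hu)
    have h2 := M.P_sub (Finset.mem_coe.2 hu₂P)
    exact ⟨by linarith [h1.1, ht1.le], by linarith [h2.2, ht2.le]⟩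
  have hcov : t ∈ ⋃ a : M.A, M.D a := by rw [← M.cover]; exact ht01
  obtain ⟨S, ⟨a', rfl⟩, ht'⟩ := hcov
  have ht' : t ∈ M.D a' := ht'
  rcases M.A_cover a' with g0 | g1 | g2
  · obtain ⟨p, q, hadj, hD⟩ := M.A0_D g0
    have htIoo : t ∈ Set.Ioo u v := ⟨ht1, lt_of_lt_of_le ht2 hu₂le⟩
    refine ⟨a', Set.mem_union_left _ g0, ?_⟩
    apply M.D0_sub_R0 g0 ha
    rw [hD, hR]
    rw [hD] at ht'
    exact M.adj_subset hadj hu hv ht' htIoo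
  · obtain ⟨p, hp, hD⟩ := M.A12_D (Set.mem_union_left _ g1)
    rw [hD] at ht'
    exact absurd (ht' ▸ hp) htP
  · obtain ⟨p, hp, hD⟩ := M.A12_D (Set.mem_union_right _ g2)
    rw [hD] at ht'
    exact absurd (ht' ▸ hp) htP

lemma exists_sft_ext {a : M.A} (ha : a ∈ M.A0 ∪ M.A1) : ∃ z ∈ M.SFT, z 0 = a := by
  classical
  have hstep : ∀ c : {c : M.A // c ∈ M.A0 ∪ M.A1},
      ∃ c' : {c : M.A // c ∈ M.A0 ∪ M.A1}, M.D0 c'.1 ⊆ M.R0 c.1 := fun c => by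
    obtain ⟨a', ha', hsub⟩ := M.exists_next c.2
    exact ⟨⟨a', ha'⟩, hsub⟩
  choose g hg using hstep
  refine ⟨fun n => (g^[n] ⟨a, ha⟩).1, ?_, rfl⟩
  intro n
  show M.D0 (g^[n+1] ⟨a, ha⟩).1 ⊆ M.R0 (g^[n] ⟨a, ha⟩).1
  rw [Function.iterate_succ_apply']
  exact hg _

lemma exists_sft_word (u : ℕ → M.A) (N : ℕ) (hN : 0 < N)
    (hlink : ∀ i, i + 1 < N → M.D0 (u (i+1)) ⊆ M.R0 (u i))
    (hlast : u (N-1) ∈ M.A0 ∪ M.A1) :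
    ∃ z ∈ M.SFT, ∀ i, i < N → z i = u i := by
  obtain ⟨z0, hz0, hz00⟩ := M.exists_sft_ext hlast
  refine ⟨fun n => if h : n < N then u n else z0 (n - (N-1)), ?_, ?_⟩
  · intro k
    by_cases h1 : k + 1 < N
    · have h2 : k < N := by omega
      simp only [dif_pos h1, dif_pos h2]
      exact hlink k h1
    · by_cases h2 : k < N
      · have hk : k = N - 1 := by omega
        simp only [dif_neg h1, dif_pos h2]
        have e1 : k + 1 - (N - 1) = 1 := by omega
        rw [e1, hk]
        have hlink0 := hz0 0
        rwa [hz00] at hlink0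
      · simp only [dif_neg h1, dif_neg h2]
        have e1 : k + 1 - (N-1) = (k - (N-1)) + 1 := by omega
        rw [e1]
        exact hz0 (k - (N-1))
  · intro i hi
    simp [hi]

lemma lang_of_links {n : ℕ} (hn : 0 < n) (u : Fin n → M.A)
    (hlink : ∀ i : ℕ, (h : i + 1 < n) → M.D0 (u ⟨i+1, h⟩) ⊆ M.R0 (u ⟨i, by omega⟩))
    (hlast : u ⟨n-1, by omega⟩ ∈ M.A0 ∪ M.A1) : u ∈ M.Lang n := by
  classical
  obtain ⟨z, hz, hzi⟩ := M.exists_sft_word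
    (fun i => if h : i < n then u ⟨i, h⟩ else u ⟨0, hn⟩) n hn
    (fun i h => by
      have h2 : i < n := by omega
      simp only [dif_pos h, dif_pos h2]
      exact hlink i h)
    (by
      have h : n - 1 < n := by omega
      simp only [dif_pos h]
      exact hlast)
  refine ⟨z, hz, 0, fun i => ?_⟩
  rw [zero_add, hzi i.1 i.2]
  simp only [dif_pos i.2]

lemma lang_subword (z : ℕ → M.A) (hz : z ∈ M.SFT) (m n : ℕ) :
    (fun i : Fin n => z (m + ↑i)) ∈ M.Lang n :=
  ⟨z, hz, m, fun _ => rfl⟩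

/-! ### Openness criterion -/

lemma isOpen_special {n : ℕ} (u : Fin n → M.A)
    (h : ∀ y : Fin (n+1) → ℝ, y ∈ M.finTraj (n+1) → M.SpecialLabeled y u →
      ∃ ε, 0 < ε ∧ ∀ y' : Fin (n+1) → ℝ, y' ∈ M.finTraj (n+1) →
        (∀ i, |y' i - y i| < ε) → M.SpecialLabeled y' u) :
    IsOpen {z : M.finTraj (n+1) | M.SpecialLabeled z.1 u} := by
  rw [Metric.isOpen_iff]
  rintro ⟨y, hy⟩ hS
  obtain ⟨ε, hε, hball⟩ := h y hy hS
  refine ⟨ε, hε, ?_⟩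
  rintro ⟨y', hy'⟩ hmem
  have hd : dist y' y < ε := by
    have := Metric.mem_ball.1 hmem
    rwa [Subtype.dist_eq] at this
  exact hball y' hy' (fun i => by
    have := (dist_pi_lt_iff hε).1 hd i
    rwa [Real.dist_eq] at this)

/-! ### The propagation step -/

lemma prop_step {γ δ η : ℝ}
    (hγ : ∀ p ∈ M.P, ∀ q ∈ M.P, p ≠ q → γ ≤ |p - q|)
    (hδD : ∀ p ∈ M.P, ∀ c : M.A, p ∉ M.D c → ∀ r, |r - p| < δ → r ∉ M.D c)
    (huc : ∀ c ∈ M.A0, ∀ s ∈ M.D c, ∀ t ∈ M.D c, |s - t| < δ → |M.f c s - M.f c t| < η)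
    (hsum : δ + η ≤ γ) (hδγ : δ ≤ γ)
    {ws wt s t : ℝ} (hwsP : ws ∈ M.P) (hwtP : wt ∈ M.P)
    (hGF : (s, t) ∈ M.GF) (hsne : s ≠ ws) (hsP : s ∉ M.P)
    (hsd : |s - ws| < δ) (htd : |t - wt| < δ) :
    ∃ c, c ∈ M.A0 ∧ s ∈ M.D c ∧ ws ∈ M.D c ∧ t = M.f c s ∧ M.f c ws = wt ∧
      t ∈ M.R c ∧ t ≠ wt ∧ t ∉ M.P := by
  obtain ⟨c, hc⟩ := M.GF_cases hGF
  rcases hc with ⟨hc0, hsD, hte⟩ | ⟨hc12, hD, htR⟩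
  · have hwsD : ws ∈ M.D c := by
      by_contra hno
      exact hδD ws hwsP c hno s hsd hsD
    have hfwsP : M.f c ws ∈ M.P := M.f_endpoint_mem_P hc0 hwsD hwsP
    have hucc : |M.f c s - M.f c ws| < η := huc c hc0 s hsD ws hwsD hsd
    have hfeq : M.f c ws = wt := by
      by_contra hne
      have h1 : γ ≤ |M.f c ws - wt| := hγ _ hfwsP _ hwtP hne
      have h2 : |M.f c ws - wt| ≤ |M.f c ws - M.f c s| + |M.f c s - wt| := abs_sub_le _ _ _
      rw [abs_sub_comm (M.f c ws) (M.f c s), ← hte] at h2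
      rw [abs_sub_comm (M.f c s) (M.f c ws), ← hte] at hucc
      rw [abs_sub_comm t (M.f c ws)] at h2
      linarith
    have htne : t ≠ wt := by
      intro he
      apply hsne
      apply M.f_injOn hc0 hsD hwsD
      rw [← hte, he, hfeq]
    have htP : t ∉ M.P := by
      intro hP
      apply htne
      by_contra hne
      have h1 := hγ t hP wt hwtP hne
      linarith
    exact ⟨c, hc0, hsD, hwsD, hte, hfeq, hte ▸ M.f_mapsTo hc0 hsD, htne, htP⟩
  · exfalso
    obtain ⟨p, hp, hD'⟩ := M.A12_D hc12
    have hps : p = s := Set.singleton_eq_singleton_iff.1 (hD'.symm.trans hD)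
    exact hsP (hps ▸ hp)

end MarkovMultiMap
namespace MarkovMultiMap

variable (M : MarkovMultiMap)

lemma finTraj_pair {N : ℕ} {y : Fin N → ℝ} (hy : y ∈ M.finTraj N) {i : ℕ} (h : i + 1 < N) :
    (y ⟨i, by omega⟩, y ⟨i+1, h⟩) ∈ M.GF :=
  hy.2 ⟨i, by omega⟩ h

lemma essential_A0 (hpp : M.ProperlyParametrized) {a : M.A} (ha : a ∈ M.A0)
    (hlang : (fun _ : Fin 1 => a) ∈ M.Lang 1) :
    M.EssentialWord (fun _ : Fin 1 => a) := by
  classical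
  haveI := M.finA
  refine ⟨hlang, M.isOpen_special _ ?_⟩
  intro y hy hS
  have hpair : (y ⟨0, by omega⟩, y ⟨1, by omega⟩) ∈ M.G0 a := hS 0
  obtain ⟨hs0, ht0⟩ := M.A0_pair ha hpair
  set y0 := y ⟨0, by omega⟩ with hy0
  set y1 := y ⟨1, by omega⟩ with hy1
  obtain ⟨p, q, hadj, hD⟩ := M.A0_D ha
  have hs0' : y0 ∈ Set.Ioo p q := by rw [hD, interior_Icc] at hs0; exact hs0
  have hy0P : y0 ∉ M.P := fun h => M.adj_not_P hadj hs0' (Finset.mem_coe.2 h)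
  -- separation from domains not containing y0
  obtain ⟨ρD, hρD, hρDs⟩ := mm_finmin' (ι := M.A) (fun c => y0 ∉ M.D c)
    (fun c ε => ∀ r, |r - y0| < ε → r ∉ M.D c)
    (fun c ε ε' _ hle hB r hr => hB r (lt_of_lt_of_le hr hle))
    (fun c hc => mm_sep (M.D_closed c) hc)
  -- separation of values of other branches through y0
  obtain ⟨ρV, hρV, hρVs⟩ := mm_finmin' (ι := M.A)
    (fun c => c ∈ M.A0 ∧ y0 ∈ M.D c ∧ c ≠ a)
    (fun c ε => ε ≤ |M.f c y0 - y1|)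
    (fun c ε ε' _ hle hB => le_trans hle hB)
    (fun c hc => by
      refine ⟨|M.f c y0 - y1|, ?_, le_rfl⟩
      rw [abs_pos, sub_ne_zero]
      intro heq
      have hy0int : y0 ∈ interior (M.D c) := by
        obtain ⟨p', q', hadj', hD'⟩ := M.A0_D hc.1
        rw [hD', interior_Icc]
        have hm := hc.2.1
        rw [hD'] at hm
        have hne1 : y0 ≠ p' := fun h => hy0P (h ▸ hadj'.1)
        have hne2 : y0 ≠ q' := fun h => hy0P (h ▸ hadj'.2.1)
        exact ⟨lt_of_le_of_ne hm.1 (Ne.symm hne1), lt_of_le_of_ne hm.2 hne2⟩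
      have hmem1 : (y0, y1) ∈ M.G0 c := by
        rw [M.G0_A0 _ hc.1]
        exact ⟨by rw [M.D0_A0 _ hc.1]; exact hy0int, heq.symm⟩
      exact Set.disjoint_left.1 (hpp.2 c a hc.2.2) hmem1 hpair)
  set ρE := min (y0 - p) (q - y0) with hρE
  have hρEpos : 0 < ρE := lt_min (by linarith [hs0'.1]) (by linarith [hs0'.2])
  set η := ρV / 3 with hη
  obtain ⟨δuc, hδuc, hucp⟩ := M.f_uc (ε := η) (by positivity)
  set δ := min (min ρD ρE) (min δuc η) with hδ
  have hδpos : 0 < δ := by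
    apply lt_min (lt_min hρD hρEpos) (lt_min hδuc (by positivity))
  refine ⟨δ, hδpos, ?_⟩
  intro y' hy' hd
  have hGF : (y' ⟨0, by omega⟩, y' ⟨1, by omega⟩) ∈ M.GF := M.finTraj_pair hy' (by omega)
  have hd0 : |y' ⟨0, by omega⟩ - y0| < δ := hd ⟨0, by omega⟩
  have hd1 : |y' ⟨1, by omega⟩ - y1| < δ := hd ⟨1, by omega⟩
  set s' := y' ⟨0, by omega⟩
  set t' := y' ⟨1, by omega⟩
  obtain ⟨c, hcs⟩ := M.GF_cases hGF
  have hmain : (s', t') ∈ M.G0 a := by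
    rcases hcs with ⟨hc0, hsD, hte⟩ | ⟨hc12, hDc, htR⟩
    · -- branch case
      have hy0D : y0 ∈ M.D c := by
        by_contra hno
        exact hρDs c hno s' (lt_of_lt_of_le hd0 (le_trans (min_le_left _ _) (min_le_left _ _))) hsD
      by_cases hca : c = a
      · subst hca
        have hs'I : s' ∈ Set.Ioo p q := by
          have h1 : |s' - y0| < ρE := lt_of_lt_of_le hd0 (le_trans (min_le_left _ _) (min_le_right _ _))
          have h2 := abs_lt.1 h1
          constructor
          · have := min_le_left (y0 - p) (q - y0); simp only [hρE] at h2 ⊢; linarith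
          · have := min_le_right (y0 - p) (q - y0); simp only [hρE] at h2 ⊢; linarith
        rw [M.G0_A0 _ hc0]
        refine ⟨?_, hte⟩
        rw [M.D0_A0 _ hc0, hD, interior_Icc]
        exact hs'I
      · exfalso
        have hsep := hρVs c ⟨hc0, hy0D, hca⟩
        have huc1 : |M.f c s' - M.f c y0| < η :=
          hucp c hc0 s' hsD y0 hy0D (lt_of_lt_of_le hd0 (le_trans (min_le_right _ _) (min_le_left _ _)))
        have htri : |M.f c y0 - y1| ≤ |M.f c y0 - M.f c s'| + |M.f c s' - y1| := abs_sub_le _ _ _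
        rw [abs_sub_comm (M.f c y0) (M.f c s'), ← hte] at htri
        rw [← hte] at huc1
        have hd1' : |t' - y1| < η := lt_of_lt_of_le hd1 (le_trans (min_le_right _ _) (min_le_right _ _))
        simp only [hη] at huc1 hd1'
        linarith
    · -- singleton case: impossible
      exfalso
      obtain ⟨pt, hpt, hDc'⟩ := M.A12_D hc12
      have hy0nD : y0 ∉ M.D c := by
        rw [hDc']
        intro h
        exact hy0P (by rw [Set.mem_singleton_iff] at h; exact h ▸ hpt)
      have : s' ∉ M.D c :=
        hρDs c hy0nD s' (lt_of_lt_of_le hd0 (le_trans (min_le_left _ _) (min_le_left _ _)))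
      rw [hDc] at this
      exact this rfl
  intro i
  have hi0 : i = 0 := Fin.fin_one_eq_zero i
  subst hi0
  exact hmain

end MarkovMultiMap
namespace MarkovMultiMap

variable (M : MarkovMultiMap)

lemma essential_A2run (hpp : M.ProperlyParametrized) {m : ℕ} (w : ℕ → ℝ)
    (u : Fin (m+1) → M.A)
    (hA2 : ∀ i : ℕ, (h : i < m) → u ⟨i, by omega⟩ ∈ M.A2 ∧
      M.D (u ⟨i, by omega⟩) = {w i} ∧ M.R (u ⟨i, by omega⟩) = {w (i+1)})
    (hc : u (Fin.last m) ∈ M.A1) (hcD : M.D (u (Fin.last m)) = {w m})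
    (hlang : u ∈ M.Lang (m+1)) :
    M.EssentialWord u := by
  classical
  haveI := M.finA
  obtain ⟨γ, hγpos, hγ⟩ := M.P_gap
  obtain ⟨δD, hδDpos, hδDs⟩ := mm_finmin' (ι := (↥M.P) × M.A)
    (fun z => (z.1 : ℝ) ∉ M.D z.2)
    (fun z ε => ∀ r, |r - (z.1 : ℝ)| < ε → r ∉ M.D z.2)
    (fun z ε ε' _ hle hB r hr => hB r (lt_of_lt_of_le hr hle))
    (fun z hz => mm_sep (M.D_closed z.2) hz)
  have hδD : ∀ p ∈ M.P, ∀ c : M.A, p ∉ M.D c → ∀ r, |r - p| < δD → r ∉ M.D c :=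
    fun p hp c hnc r hr => hδDs (⟨p, hp⟩, c) hnc r hr
  refine ⟨hlang, M.isOpen_special _ ?_⟩
  intro y hy hS
  have hPw : ∀ j, j ≤ m → w j ∈ M.P := by
    intro j hj
    rcases lt_or_eq_of_le hj with h | h
    · obtain ⟨pt, hpt, hD'⟩ := M.A12_D (Set.mem_union_right _ (hA2 j h).1)
      have he := Set.singleton_eq_singleton_iff.1 (hD'.symm.trans (hA2 j h).2.1)
      exact he ▸ hpt
    · rw [h]
      obtain ⟨pt, hpt, hD'⟩ := M.A12_D (Set.mem_union_left _ hc)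
      have he := Set.singleton_eq_singleton_iff.1 (hD'.symm.trans hcD)
      exact he ▸ hpt
  have hyval : ∀ j, (h : j ≤ m) → y ⟨j, by omega⟩ = w j := by
    intro j hj
    rcases lt_or_eq_of_le hj with h | h
    · have hp := hS ⟨j, by omega⟩
      obtain ⟨hD, -, -, -⟩ := M.A2_pair (hA2 j h).1 hp
      exact Set.singleton_eq_singleton_iff.1 (hD.symm.trans (hA2 j h).2.1)
    · have hp := hS (Fin.last m)
      obtain ⟨hD, -, -⟩ := M.A1_pair hc hp
      have hm : y ⟨m, by omega⟩ = w m := Set.singleton_eq_singleton_iff.1 (hD.symm.trans hcD)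
      have e : (⟨j, by omega⟩ : Fin (m+2)) = ⟨m, by omega⟩ := Fin.ext h
      rw [e, h]
      exact hm
  set t₀ := y ⟨m+1, by omega⟩ with ht₀def
  have ht₀int : t₀ ∈ interior (M.R (u (Fin.last m))) := (M.A1_pair hc (hS (Fin.last m))).2.2
  obtain ⟨uu, vv, huu, hvv, huvlt, hR, hPint⟩ := M.A1_R hc
  have ht₀I : t₀ ∈ Set.Ioo uu vv := by rw [hR, interior_Icc] at ht₀int; exact ht₀int
  have ht₀P : t₀ ∉ (M.P : Set ℝ) := by
    intro hmem
    have h2 : t₀ ∈ Set.Icc uu vv ∩ (M.P : Set ℝ) := ⟨Set.Ioo_subset_Icc_self ht₀I, hmem⟩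
    rw [hPint] at h2
    simp only [Set.mem_insert_iff, Set.mem_singleton_iff] at h2
    rcases h2 with h | h
    · rw [h] at ht₀I; exact lt_irrefl uu ht₀I.1
    · rw [h] at ht₀I; exact lt_irrefl vv ht₀I.2
  obtain ⟨ρ1, hρ1pos, hρ1⟩ := mm_sep M.P_closed ht₀P
  set ρ3 := min (t₀ - uu) (vv - t₀) with hρ3
  have hρ3pos : 0 < ρ3 := lt_min (by linarith [ht₀I.1]) (by linarith [ht₀I.2])
  have hminγρ : 0 < min γ ρ1 := lt_min hγpos hρ1pos
  set η := min γ ρ1 / 4 with hη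
  have hηpos : 0 < η := by simp only [hη]; linarith
  obtain ⟨δuc, hδucpos, hucp⟩ := M.f_uc (ε := η) hηpos
  set δ := min (min η δD) (min δuc ρ3) with hδdef
  have hδpos : 0 < δ := lt_min (lt_min hηpos hδDpos) (lt_min hδucpos hρ3pos)
  have hδη : δ ≤ η := le_trans (min_le_left _ _) (min_le_left _ _)
  have hδD' : δ ≤ δD := le_trans (min_le_left _ _) (min_le_right _ _)
  have hδuc' : δ ≤ δuc := le_trans (min_le_right _ _) (min_le_left _ _)
  have hδρ3 : δ ≤ ρ3 := le_trans (min_le_right _ _) (min_le_right _ _)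
  have hηγ : η ≤ γ / 4 := by simp only [hη]; have := min_le_left γ ρ1; linarith
  have hηρ1 : η ≤ ρ1 / 4 := by simp only [hη]; have := min_le_right γ ρ1; linarith
  have hsum : δ + η ≤ γ := by linarith
  have hδγ : δ ≤ γ := by linarith
  have hsumρ : δ + η ≤ ρ1 := by linarith
  refine ⟨δ, hδpos, ?_⟩
  intro y' hy' hd
  have huc' : ∀ c ∈ M.A0, ∀ s ∈ M.D c, ∀ t ∈ M.D c, |s - t| < δ → |M.f c s - M.f c t| < η :=
    fun c hc0 s hs t ht hst => hucp c hc0 s hs t ht (lt_of_lt_of_le hst hδuc')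
  have hδDd : ∀ p ∈ M.P, ∀ c : M.A, p ∉ M.D c → ∀ r, |r - p| < δ → r ∉ M.D c :=
    fun p hp c hnc r hr => hδD p hp c hnc r (lt_of_lt_of_le hr hδD')
  set Y : ℕ → ℝ := fun j => y' ⟨min j (m+1), by omega⟩ with hYdef
  have hYe : ∀ j, (h : j < m+2) → Y j = y' ⟨j, h⟩ := by
    intro j h
    simp only [hYdef]
    congr 1
    exact Fin.ext (by simp only; omega)
  have hYGF : ∀ j, (h : j + 1 < m+2) → (Y j, Y (j+1)) ∈ M.GF := by
    intro j h
    rw [hYe j (by omega), hYe (j+1) h]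
    exact M.finTraj_pair hy' h
  have hYdist : ∀ j, j ≤ m → |Y j - w j| < δ := by
    intro j hj
    rw [hYe j (by omega)]
    have := hd ⟨j, by omega⟩
    rwa [hyval j hj] at this
  have hYdlast : |Y (m+1) - t₀| < δ := by
    rw [hYe (m+1) (by omega)]
    exact hd ⟨m+1, by omega⟩
  have hfix : ∀ j, j ≤ m → Y j = w j := by
    by_contra hcon
    push_neg at hcon
    obtain ⟨j₀, hj₀m, hj₀ne⟩ := hcon
    have hPex : ∃ j, j ≤ m ∧ Y j ≠ w j := ⟨j₀, hj₀m, hj₀ne⟩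
    set j₁ := Nat.find hPex with hj₁def
    obtain ⟨hj₁m, hj₁ne⟩ := Nat.find_spec hPex
    have hbase : Y j₁ ≠ w j₁ ∧ Y j₁ ∉ M.P := by
      refine ⟨hj₁ne, fun hYP => ?_⟩
      have h1 := hγ _ hYP _ (hPw j₁ hj₁m) hj₁ne
      have h2 := hYdist j₁ hj₁m
      linarith
    have hdev : ∀ j, j₁ ≤ j → j ≤ m → Y j ≠ w j ∧ Y j ∉ M.P := by
      intro j
      induction j with
      | zero =>
        intro h1 _
        have e : j₁ = 0 := Nat.le_zero.1 h1
        exact e ▸ hbase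
      | succ n ih =>
        intro h1 h2
        rcases Nat.lt_or_ge n j₁ with hlt | hge
        · have e : j₁ = n + 1 := by omega
          exact e ▸ hbase
        · have hdn := ih hge (by omega)
          obtain ⟨c, -, -, -, -, -, -, htne, htP⟩ :=
            M.prop_step hγ hδDd huc' hsum hδγ (hPw n (by omega)) (hPw (n+1) (by omega))
              (hYGF n (by omega)) hdn.1 hdn.2 (hYdist n (by omega)) (hYdist (n+1) (by omega))
          exact ⟨htne, htP⟩
    obtain ⟨hYm, hYmP⟩ := hdev m hj₁m le_rfl
    have hGFm := hYGF m (by omega)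
    obtain ⟨c', hcs⟩ := M.GF_cases hGFm
    rcases hcs with ⟨hc0, hsD, hte⟩ | ⟨hc12, hDc, -⟩
    · have hwmD : w m ∈ M.D c' := by
        by_contra hno
        exact hδDd (w m) (hPw m le_rfl) c' hno (Y m) (hYdist m le_rfl) hsD
      have hfP : M.f c' (w m) ∈ M.P := M.f_endpoint_mem_P hc0 hwmD (hPw m le_rfl)
      have huc1 : |M.f c' (Y m) - M.f c' (w m)| < η := huc' c' hc0 _ hsD _ hwmD (hYdist m le_rfl)
      rw [← hte] at huc1
      have htri : |M.f c' (w m) - t₀| ≤ |M.f c' (w m) - Y (m+1)| + |Y (m+1) - t₀| :=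
        abs_sub_le _ _ _
      rw [abs_sub_comm (M.f c' (w m)) (Y (m+1))] at htri
      have hlt : |M.f c' (w m) - t₀| < ρ1 := by linarith
      exact (hρ1 _ hlt) (Finset.mem_coe.2 hfP)
    · obtain ⟨pt, hpt, hD'⟩ := M.A12_D hc12
      have he : pt = Y m := Set.singleton_eq_singleton_iff.1 (hD'.symm.trans hDc)
      exact hYmP (he ▸ hpt)
  -- conclude special labeling
  intro i
  by_cases him : (i : ℕ) < m
  · have hieq : u ⟨(i : ℕ), by omega⟩ = u i := congrArg u (Fin.ext rfl)
    obtain ⟨hiA2, hiD, hiR⟩ := hA2 (i : ℕ) him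
    rw [hieq] at hiA2 hiD hiR
    show (y' i.castSucc, y' i.succ) ∈ M.G0 (u i)
    rw [M.G0_A2 _ hiA2, M.Gr_A12 _ (Set.mem_union_right _ hiA2)]
    refine ⟨?_, ?_⟩
    · rw [hiD]
      show y' i.castSucc = w (i : ℕ)
      exact (hYe (i : ℕ) (by omega)).symm.trans (hfix (i : ℕ) him.le)
    · rw [hiR]
      show y' i.succ = w ((i : ℕ) + 1)
      exact (hYe ((i : ℕ) + 1) (by omega)).symm.trans (hfix ((i : ℕ) + 1) him)
  · have hieq : i = Fin.last m := Fin.ext (by simp only [Fin.val_last]; omega)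
    rw [hieq]
    show (y' (Fin.last m).castSucc, y' (Fin.last m).succ) ∈ M.G0 (u (Fin.last m))
    rw [M.G0_A1 _ hc]
    refine ⟨?_, ?_⟩
    · rw [hcD]
      show y' (Fin.last m).castSucc = w m
      exact (hYe m (by omega)).symm.trans (hfix m le_rfl)
    · rw [M.R0_A01 _ (Set.mem_union_right _ hc), hR, interior_Icc]
      show y' (Fin.last m).succ ∈ Set.Ioo uu vv
      have he : y' (Fin.last m).succ = Y (m+1) := (hYe (m+1) (by omega)).symm
      rw [he]
      have h1 := abs_lt.1 (lt_of_lt_of_le hYdlast hδρ3)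
      have h2 := min_le_left (t₀ - uu) (vv - t₀)
      have h3 := min_le_right (t₀ - uu) (vv - t₀)
      simp only [hρ3] at h1
      constructor <;> [linarith [h1.1]; linarith [h1.2]]

end MarkovMultiMap
/-- Chains of `A0` branches shadowing the trajectory `x` from position `l`,
with initial domain constrained to `W`. -/
def MarkovMultiMap.ChainW (M : MarkovMultiMap) (x : ℕ → ℝ) (l : ℕ) (W : Set ℝ) (n : ℕ)
    (E : ℕ → M.A) : Prop :=
  (∀ i, i < n → E i ∈ M.A0 ∧ x (l+i) ∈ M.D (E i) ∧ M.f (E i) (x (l+i)) = x (l+i+1)) ∧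
  (∀ i, i + 1 < n → M.D (E (i+1)) ⊆ M.R (E i)) ∧
  (0 < n → M.D (E 0) ⊆ W)

namespace MarkovMultiMap

variable (M : MarkovMultiMap)

lemma ChainW_mono {x : ℕ → ℝ} {l : ℕ} {W : Set ℝ} {n n' : ℕ} {E : ℕ → M.A}
    (h : M.ChainW x l W n E) (hle : n' ≤ n) : M.ChainW x l W n' E :=
  ⟨fun i hi => h.1 i (lt_of_lt_of_le hi hle), fun i hi => h.2.1 i (lt_of_lt_of_le hi hle),
   fun hn => h.2.2 (lt_of_lt_of_le hn hle)⟩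

lemma ChainW_infinite [Nonempty M.A] {x : ℕ → ℝ} {l : ℕ} {W : Set ℝ}
    (h : ∀ n, ∃ E, M.ChainW x l W n E) : ∃ E, ∀ n, M.ChainW x l W n E := by
  haveI := M.finA
  choose F hF using h
  obtain ⟨e, he⟩ := mm_diag (fun m i => F m i)
  refine ⟨e, fun n => ?_⟩
  obtain ⟨m, hm, hagree⟩ := he n
  refine ⟨fun i hi => ?_, fun i hi => ?_, fun hn => ?_⟩
  · rw [hagree i hi]
    exact (hF m).1 i (lt_of_lt_of_le hi hm)
  · rw [hagree i (by omega), hagree (i+1) hi]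
    exact (hF m).2.1 i (by omega)
  · rw [hagree 0 hn]
    exact (hF m).2.2 (by omega)

lemma D_sub_R_of_mem' {c e : M.A} (hc : c ∈ M.A0) (he : e ∈ M.A0 ∪ M.A1) {t : ℝ}
    (h1 : t ∈ M.D c) (h2 : t ∈ M.R e) (h3 : t ∉ M.P) : M.D c ⊆ M.R e := by
  obtain ⟨p, q, hadj, hD⟩ := M.A0_D hc
  obtain ⟨u, v, hu, hv, huv, hR⟩ := M.A01_R he
  rw [hD] at h1 ⊢
  rw [hR] at h2 ⊢
  have hIoo : t ∈ Set.Ioo u v := by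
    refine ⟨lt_of_le_of_ne h2.1 ?_, lt_of_lt_of_le (lt_of_le_of_ne h2.2 ?_) le_rfl⟩
    · intro hh; exact h3 (hh ▸ hu)
    · intro hh; exact h3 (hh ▸ hv)
  exact M.adj_subset hadj hu hv h1 hIoo

lemma essential_window (hpp : M.ProperlyParametrized) {x : ℕ → ℝ} {b : ℕ → M.A}
    (hb : ∀ j, (x j, x (j+1)) ∈ M.G0 (b j)) (s k : ℕ)
    (hA2 : ∀ j, s ≤ j → b j ∈ M.A2)
    (hnoA1 : ∀ l d, d ∈ M.A1 → s + 1 ≤ l → l ≤ s + k + 1 → M.D d = {x (l-1)} →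
      x l ∈ M.R d → ¬ ∃ E, M.ChainW x l (M.R d) (s + k + 1 - l) E)
    (hnofree : ¬ ∃ E, M.ChainW x s Set.univ (k+1) E)
    (hlang : (fun i : Fin (k+1) => b (s + (i : ℕ))) ∈ M.Lang (k+1)) :
    M.EssentialWord (fun i : Fin (k+1) => b (s + (i : ℕ))) := by
  classical
  haveI := M.finA
  haveI : Nonempty M.A := ⟨b 0⟩
  obtain ⟨γ, hγpos, hγ⟩ := M.P_gap
  obtain ⟨δD, hδDpos, hδDs⟩ := mm_finmin' (ι := (↥M.P) × M.A)
    (fun z => (z.1 : ℝ) ∉ M.D z.2)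
    (fun z ε => ∀ r, |r - (z.1 : ℝ)| < ε → r ∉ M.D z.2)
    (fun z ε ε' _ hle hB r hr => hB r (lt_of_lt_of_le hr hle))
    (fun z hz => mm_sep (M.D_closed z.2) hz)
  have hδD : ∀ p ∈ M.P, ∀ c : M.A, p ∉ M.D c → ∀ r, |r - p| < δD → r ∉ M.D c :=
    fun p hp c hnc r hr => hδDs (⟨p, hp⟩, c) hnc r hr
  obtain ⟨δR, hδRpos, hδRs⟩ := mm_finmin' (ι := (↥M.P) × M.A)
    (fun z => (z.1 : ℝ) ∉ M.R z.2)
    (fun z ε => ∀ r, |r - (z.1 : ℝ)| < ε → r ∉ M.R z.2)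
    (fun z ε ε' _ hle hB r hr => hB r (lt_of_lt_of_le hr hle))
    (fun z hz => mm_sep (M.R_closed z.2) hz)
  have hδR : ∀ p ∈ M.P, ∀ c : M.A, p ∉ M.R c → ∀ r, |r - p| < δR → r ∉ M.R c :=
    fun p hp c hnc r hr => hδRs (⟨p, hp⟩, c) hnc r hr
  set η := γ / 4 with hη
  have hηpos : 0 < η := by simp only [hη]; linarith
  obtain ⟨δuc, hδucpos, hucp⟩ := M.f_uc (ε := η) hηpos
  set δ := min (min η δD) (min δuc δR) with hδdef
  have hδpos : 0 < δ := lt_min (lt_min hηpos hδDpos) (lt_min hδucpos hδRpos)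
  have hδη : δ ≤ η := le_trans (min_le_left _ _) (min_le_left _ _)
  have hδD' : δ ≤ δD := le_trans (min_le_left _ _) (min_le_right _ _)
  have hδuc' : δ ≤ δuc := le_trans (min_le_right _ _) (min_le_left _ _)
  have hδR' : δ ≤ δR := le_trans (min_le_right _ _) (min_le_right _ _)
  have hsum : δ + η ≤ γ := by simp only [hη] at hδη ⊢; linarith
  have hδγ : δ ≤ γ := by simp only [hη] at hδη; linarith
  have hDRb : ∀ j, s ≤ j → M.D (b j) = {x j} ∧ M.R (b j) = {x (j+1)} ∧
      x j ∈ M.P ∧ x (j+1) ∈ M.P := by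
    intro j hj
    obtain ⟨h1, h2, h3, h4⟩ := M.A2_pair (hA2 j hj) (hb j)
    exact ⟨h1, h2, h3, h4⟩
  have hPx : ∀ j, j ≤ k + 1 → x (s + j) ∈ M.P := by
    intro j hj
    rcases Nat.lt_or_ge j (k+1) with h | h
    · exact (hDRb (s+j) (by omega)).2.2.1
    · have e : s + j = (s + k) + 1 := by omega
      rw [e]
      exact (hDRb (s+k) (by omega)).2.2.2
  refine ⟨hlang, M.isOpen_special _ ?_⟩
  intro y hy hS
  have hyval0 : ∀ j, (h : j < k + 1) →
      y ⟨j, by omega⟩ = x (s + j) ∧ y ⟨j+1, by omega⟩ = x (s + j + 1) := by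
    intro j h
    have hp := hS ⟨j, h⟩
    obtain ⟨hD, hR, -, -⟩ := M.A2_pair (hA2 (s+j) (by omega)) hp
    constructor
    · exact (Set.singleton_eq_singleton_iff.1 (hD.symm.trans (hDRb (s+j) (by omega)).1))
    · exact (Set.singleton_eq_singleton_iff.1 (hR.symm.trans (hDRb (s+j) (by omega)).2.1))
  have hyval : ∀ j, (h : j ≤ k + 1) → y ⟨j, by omega⟩ = x (s + j) := by
    intro j hj
    rcases Nat.lt_or_ge j (k+1) with h | h
    · exact (hyval0 j h).1
    · have e : j = k + 1 := by omega
      have h2 := (hyval0 k (by omega)).2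
      have e2 : (⟨j, by omega⟩ : Fin (k+2)) = ⟨k+1, by omega⟩ := Fin.ext (by simp only; omega)
      rw [e2, e]
      exact h2
  refine ⟨δ, hδpos, ?_⟩
  intro y' hy' hd
  have huc' : ∀ c ∈ M.A0, ∀ s' ∈ M.D c, ∀ t' ∈ M.D c, |s' - t'| < δ → |M.f c s' - M.f c t'| < η :=
    fun c hc0 s' hs t' ht hst => hucp c hc0 s' hs t' ht (lt_of_lt_of_le hst hδuc')
  have hδDd : ∀ p ∈ M.P, ∀ c : M.A, p ∉ M.D c → ∀ r, |r - p| < δ → r ∉ M.D c :=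
    fun p hp c hnc r hr => hδD p hp c hnc r (lt_of_lt_of_le hr hδD')
  set Y : ℕ → ℝ := fun j => y' ⟨min j (k+1), by omega⟩ with hYdef
  have hYe : ∀ j, (h : j < k+2) → Y j = y' ⟨j, h⟩ := by
    intro j h
    simp only [hYdef]
    congr 1
    exact Fin.ext (by simp only; omega)
  have hYGF : ∀ j, (h : j + 1 < k+2) → (Y j, Y (j+1)) ∈ M.GF := by
    intro j h
    rw [hYe j (by omega), hYe (j+1) h]
    exact M.finTraj_pair hy' h
  have hYdist : ∀ j, j ≤ k + 1 → |Y j - x (s + j)| < δ := by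
    intro j hj
    rw [hYe j (by omega)]
    have := hd ⟨j, by omega⟩
    rwa [hyval j hj] at this
  have hfix : ∀ j, j ≤ k + 1 → Y j = x (s + j) := by
    by_contra hcon
    push_neg at hcon
    have hPex : ∃ j, j ≤ k + 1 ∧ Y j ≠ x (s + j) := hcon
    set j₁ := Nat.find hPex with hj₁def
    obtain ⟨hj₁m, hj₁ne⟩ := Nat.find_spec hPex
    have hfixlt : ∀ i, i < j₁ → Y i = x (s + i) := by
      intro i hi
      by_contra hne
      exact Nat.find_min hPex hi ⟨by omega, hne⟩
    have hbase : Y j₁ ≠ x (s + j₁) ∧ Y j₁ ∉ M.P := by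
      refine ⟨hj₁ne, fun hYP => ?_⟩
      have h1 := hγ _ hYP _ (hPx j₁ hj₁m) hj₁ne
      have h2 := hYdist j₁ hj₁m
      linarith
    have hchain : ∀ n, j₁ + n ≤ k + 1 →
        ∃ E : ℕ → M.A, (∀ i, i < n → E i ∈ M.A0 ∧ x (s+j₁+i) ∈ M.D (E i) ∧
            M.f (E i) (x (s+j₁+i)) = x (s+j₁+i+1) ∧ Y (j₁+i) ∈ M.D (E i) ∧
            M.f (E i) (Y (j₁+i)) = Y (j₁+i+1)) ∧
          (∀ i, i + 1 < n → M.D (E (i+1)) ⊆ M.R (E i)) ∧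
          (Y (j₁+n) ≠ x (s+j₁+n) ∧ Y (j₁+n) ∉ M.P) := by
      intro n
      induction n with
      | zero =>
        intro _
        exact ⟨fun _ => b 0, fun i hi => absurd hi (by omega),
          fun i hi => absurd hi (by omega), hbase⟩
      | succ n ih =>
        intro h
        obtain ⟨E, hE1, hE2, hEdev⟩ := ih (by omega)
        have e1 : s + (j₁ + n) = s + j₁ + n := by omega
        have e2 : s + (j₁ + n + 1) = s + j₁ + n + 1 := by omega
        have hws : x (s + j₁ + n) ∈ M.P := by rw [← e1]; exact hPx (j₁+n) (by omega)
        have hwt : x (s + j₁ + n + 1) ∈ M.P := by rw [← e2]; exact hPx (j₁+n+1) (by omega)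
        have hd1 : |Y (j₁+n) - x (s+j₁+n)| < δ := by rw [← e1]; exact hYdist (j₁+n) (by omega)
        have hd2 : |Y (j₁+n+1) - x (s+j₁+n+1)| < δ := by
          rw [← e2]; exact hYdist (j₁+n+1) (by omega)
        obtain ⟨c, hc0, hsD, hwsD, hte, hfeq, htR, htne, htP⟩ :=
          M.prop_step hγ hδDd huc' hsum hδγ hws hwt
            (hYGF (j₁+n) (by omega)) hEdev.1 hEdev.2 hd1 hd2
        refine ⟨Function.update E n c, ?_, ?_, ?_⟩
        · intro i hi
          by_cases hin : i = n
          · subst hin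
            rw [Function.update_self]
            exact ⟨hc0, hwsD, hfeq, hsD, hte.symm⟩
          · rw [Function.update_of_ne hin]
            exact hE1 i (by omega)
        · intro i hi
          have hilt : i < n := by omega
          by_cases hin : i + 1 = n
          · rw [Function.update_of_ne (by omega : i ≠ n), hin, Function.update_self]
            obtain ⟨hEi0, -, -, hEiD, hEif⟩ := hE1 i (by omega)
            have hmem : Y (j₁+n) ∈ M.R (E i) := by
              have hm2 : Y (j₁+i+1) ∈ M.R (E i) := hEif ▸ M.f_mapsTo hEi0 hEiD
              have e : j₁ + i + 1 = j₁ + n := by omega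
              rwa [e] at hm2
            exact M.D_sub_R_of_mem' hc0 (Set.mem_union_left _ hEi0) hsD hmem hEdev.2
          · rw [Function.update_of_ne (by omega : i ≠ n),
              Function.update_of_ne (by omega : ¬ i + 1 = n)]
            exact hE2 i (by omega)
        · exact ⟨htne, htP⟩
    rcases Nat.eq_zero_or_pos j₁ with hj₁0 | hj₁pos
    · -- free chain
      obtain ⟨E, hE1, hE2, -⟩ := hchain (k+1) (by omega)
      apply hnofree
      refine ⟨E, fun i hi => ?_, fun i hi => hE2 i hi, fun _ => Set.subset_univ _⟩
      have := hE1 i hi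
      rw [hj₁0] at this
      exact ⟨this.1, this.2.1, this.2.2.1⟩
    · -- entry
      have hup : (Y (j₁ - 1), Y j₁) ∈ M.GF := by
        have := hYGF (j₁ - 1) (by omega)
        have e : j₁ - 1 + 1 = j₁ := by omega
        rwa [e] at this
      rw [hfixlt (j₁ - 1) (by omega)] at hup
      obtain ⟨c', hcs⟩ := M.GF_cases hup
      rcases hcs with ⟨hc0, hsD, hte⟩ | ⟨hc12, hDc, htR⟩
      · -- A0 upstream: forces Y j₁ ∈ P
        have : Y j₁ ∈ M.P := by
          rw [hte]
          exact M.f_endpoint_mem_P hc0 hsD (hPx (j₁ - 1) (by omega))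
        exact hbase.2 this
      · rcases hc12 with hc1 | hc2
        · -- A1 entry
          have hxl : x (s + j₁) ∈ M.R c' := by
            by_contra hno
            exact hδR _ (hPx j₁ hj₁m) c' hno (Y j₁)
              (lt_of_lt_of_le (hYdist j₁ hj₁m) hδR') htR
          apply hnoA1 (s + j₁) c' hc1 (by omega) (by omega)
          · have e : s + j₁ - 1 = s + (j₁ - 1) := by omega
            rw [e]
            exact hDc
          · exact hxl
          · obtain ⟨E, hE1, hE2, -⟩ := hchain (k+1-j₁) (by omega)
            have elen : s + k + 1 - (s + j₁) = k + 1 - j₁ := by omega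
            rw [elen]
            refine ⟨E, fun i hi => ?_, fun i hi => hE2 i hi, fun hpos => ?_⟩
            · obtain ⟨h1, h2, h3, -, -⟩ := hE1 i hi
              refine ⟨h1, ?_, ?_⟩
              · have e : s + j₁ + i = s + j₁ + i := rfl
                exact h2
              · exact h3
            · obtain ⟨-, -, -, hYD, -⟩ := hE1 0 hpos
              have hY0 : Y (j₁ + 0) = Y j₁ := by norm_num
              rw [hY0] at hYD
              exact M.D_sub_R_of_mem' (hE1 0 hpos).1 (Set.mem_union_right _ hc1) hYD htR hbase.2
        · -- A2 upstream
          obtain ⟨wpt, hwpt, hR'⟩ := M.A2_R hc2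
          rw [hR'] at htR
          exact hbase.2 (htR ▸ hwpt)
  -- conclude: special labeling
  intro i
  have hieq : b (s + ((i : ℕ))) = b (s + (i : ℕ)) := rfl
  show (y' i.castSucc, y' i.succ) ∈ M.G0 (b (s + (i : ℕ)))
  have hA2i := hA2 (s + (i : ℕ)) (by omega)
  rw [M.G0_A2 _ hA2i, M.Gr_A12 _ (Set.mem_union_right _ hA2i)]
  have hi1 : (i : ℕ) < k + 1 := i.isLt
  refine ⟨?_, ?_⟩
  · rw [(hDRb (s + (i : ℕ)) (by omega)).1]
    show y' i.castSucc = x (s + (i : ℕ))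
    exact (hYe (i : ℕ) (by omega)).symm.trans (hfix (i : ℕ) (by omega))
  · rw [(hDRb (s + (i : ℕ)) (by omega)).2.1]
    show y' i.succ = x (s + (i : ℕ) + 1)
    have := (hYe ((i : ℕ) + 1) (by omega)).symm.trans (hfix ((i : ℕ) + 1) (by omega))
    have e : s + ((i : ℕ) + 1) = s + (i : ℕ) + 1 := by omega
    rwa [e] at this

end MarkovMultiMap
namespace MarkovMultiMap

variable (M : MarkovMultiMap)

lemma ess_of_A0 (hpp : M.ProperlyParametrized) {a : M.A} (ha : a ∈ M.A0) : a ∈ M.Ess := by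
  have hlang : (fun _ : Fin 1 => a) ∈ M.Lang 1 := by
    apply M.lang_of_links (by omega)
    · intro i h
      exact absurd h (by omega)
    · exact Set.mem_union_left _ ha
  exact ⟨1, _, M.essential_A0 hpp ha hlang, ⟨0, rfl⟩⟩

lemma ess_of_A1 (hpp : M.ProperlyParametrized) {c : M.A} (hc : c ∈ M.A1) : c ∈ M.Ess := by
  obtain ⟨p, hp, hD⟩ := M.A12_D (Set.mem_union_left _ hc)
  have hlang : (fun _ : Fin 1 => c) ∈ M.Lang 1 := by
    apply M.lang_of_links (by omega)
    · intro i h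
      exact absurd h (by omega)
    · exact Set.mem_union_right _ hc
  have hess := M.essential_A2run hpp (fun _ => p) (fun _ : Fin 1 => c)
    (fun i h => absurd h (by omega)) hc hD hlang
  exact ⟨1, _, hess, ⟨0, rfl⟩⟩

lemma ess_of_run (hpp : M.ProperlyParametrized) {x : ℕ → ℝ} {b : ℕ → M.A}
    (hb : ∀ j, (x j, x (j+1)) ∈ M.G0 (b j)) (j m : ℕ) (c : M.A)
    (hrun : ∀ i, i < m → b (j+i) ∈ M.A2)
    (hc : c ∈ M.A1) (hcD : M.D c = {x (j+m)}) :
    (∀ i, i < m → b (j+i) ∈ M.Ess) ∧ c ∈ M.Ess := by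
  classical
  set u : Fin (m+1) → M.A := fun i => if (i : ℕ) < m then b (j + (i : ℕ)) else c with hu
  have huval : ∀ i : ℕ, (h : i < m) → u ⟨i, by omega⟩ = b (j + i) := by
    intro i h
    simp only [hu]
    rw [if_pos (show ((⟨i, by omega⟩ : Fin (m+1)) : ℕ) < m from h)]
  have hulast : u (Fin.last m) = c := by
    simp only [hu]
    rw [if_neg (by simp only [Fin.val_last]; omega)]
  have hA2f : ∀ i : ℕ, (h : i < m) → u ⟨i, by omega⟩ ∈ M.A2 ∧
      M.D (u ⟨i, by omega⟩) = {x (j+i)} ∧ M.R (u ⟨i, by omega⟩) = {x (j+(i+1))} := by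
    intro i h
    rw [huval i h]
    obtain ⟨h1, h2, -, -⟩ := M.A2_pair (hrun i h) (hb (j+i))
    exact ⟨hrun i h, h1, h2⟩
  have hlang : u ∈ M.Lang (m+1) := by
    apply M.lang_of_links (by omega)
    · intro i h
      have hi : i < m := by omega
      rw [huval i hi]
      by_cases him : i + 1 < m
      · rw [show u ⟨i+1, h⟩ = b (j + (i+1)) from huval (i+1) him]
        rw [M.D0_A12 _ (Set.mem_union_right _ (hrun (i+1) him)),
          M.R0_A2 _ (hrun i hi)]
        rw [(M.A2_pair (hrun (i+1) him) (hb (j+(i+1)))).1,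
          (M.A2_pair (hrun i hi) (hb (j+i))).2.1,
          show j + (i+1) = j + i + 1 by omega]
      · have e : i + 1 = m := by omega
        have hul : u ⟨i+1, h⟩ = c := by
          have : (⟨i+1, h⟩ : Fin (m+1)) = Fin.last m := Fin.ext (by simp [Fin.val_last]; omega)
          rw [this, hulast]
        rw [hul, M.D0_A12 _ (Set.mem_union_left _ hc), hcD,
          M.R0_A2 _ (hrun i hi), (M.A2_pair (hrun i hi) (hb (j+i))).2.1]
        rw [show j + m = j + i + 1 by omega]
    · have : (⟨m+1-1, by omega⟩ : Fin (m+1)) = Fin.last m := Fin.ext (by simp [Fin.val_last])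
      rw [this, hulast]
      exact Set.mem_union_right _ hc
  have hess := M.essential_A2run hpp (fun i => x (j+i)) u hA2f
    (by rw [hulast]; exact hc) (by rw [hulast]; exact hcD) hlang
  constructor
  · intro i hi
    exact ⟨m+1, u, hess, ⟨⟨i, by omega⟩, huval i hi⟩⟩
  · exact ⟨m+1, u, hess, ⟨Fin.last m, hulast⟩⟩

lemma exists_label (hpp : M.ProperlyParametrized) {x : ℕ → ℝ} (hx : x ∈ M.X) (k : ℕ) :
    ∃ a, (x k, x (k+1)) ∈ M.G0 a := by
  have h1 : (x k, x (k+1)) ∈ M.GF := hx.2 k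
  rw [← hpp.1] at h1
  obtain ⟨S, ⟨a, rfl⟩, h⟩ := h1
  exact ⟨a, h⟩

end MarkovMultiMap
/-- Every forward trajectory can be coded by an essential symbolic sequence. -/
theorem stmt7 (M : MarkovMultiMap) (hpp : M.ProperlyParametrized)
    (x : ℕ → ℝ) (hx : x ∈ M.X) :
    ∃ a ∈ M.E, ∀ i : ℕ, (x i, x (i + 1)) ∈ M.Gr (a i) := by
  classical
  haveI := M.finA
  choose b hb using M.exists_label hpp hx
  haveI : Nonempty M.A := ⟨b 0⟩
  have hbSFT : b ∈ M.SFT := M.label_SFT hb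
  have hCovEss : ∀ kk τ (c : M.A), kk ≤ τ → (∀ i, kk ≤ i → i ≤ τ → b i ∈ M.A2) →
      c ∈ M.A1 → M.D c = {x (τ+1)} → b kk ∈ M.Ess := by
    intro kk τ c hτ1 hτrun hc1 hcD
    have h := (M.ess_of_run hpp hb kk (τ+1-kk) c
      (fun i hi => hτrun (kk+i) (by omega) (by omega)) hc1
      (by rw [show kk + (τ+1-kk) = τ+1 by omega]; exact hcD)).1
    have h0 := h 0 (by omega)
    rwa [Nat.add_zero] at h0
  by_cases H : ∀ kk, b kk ∈ M.A2 → ∃ τ, kk ≤ τ ∧ (∀ i, kk ≤ i → i ≤ τ → b i ∈ M.A2) ∧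
      ∃ c ∈ M.A1, M.D c = {x (τ+1)}
  · refine ⟨b, ⟨hbSFT, fun i => ?_⟩, fun i => M.G0_sub_Gr _ (hb i)⟩
    rcases M.A_cover (b i) with h0 | h1 | h2
    · exact M.ess_of_A0 hpp h0
    · exact M.ess_of_A1 hpp h1
    · obtain ⟨τ, hτ1, hτrun, c, hc1, hcD⟩ := H i h2
      exact hCovEss i τ c hτ1 hτrun hc1 hcD
  · push_neg at H
    obtain ⟨k₀, hk₀2, hk₀⟩ := H
    have T1 : ∀ τ, k₀ ≤ τ → ∀ i, k₀ ≤ i → i ≤ τ → b i ∈ M.A2 := by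
      intro τ
      induction τ with
      | zero =>
        intro h1 i h2 h3
        have e : i = k₀ := by omega
        rw [e]; exact hk₀2
      | succ n ih =>
        intro h1 i h2 h3
        rcases Nat.lt_or_ge k₀ (n+1) with hlt | hge
        · rcases Nat.lt_or_ge i (n+1) with hi | hi
          · exact ih (by omega) i h2 (by omega)
          · have hbn : b n ∈ M.A2 := ih (by omega) n (by omega) le_rfl
            have hnext := M.after_A2 hbn (hb n) (hb (n+1))
            have e : i = n+1 := by omega
            rw [e]
            rcases hnext with g1 | g2
            · exact absurd (M.A1_pair g1 (hb (n+1))).1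
                (hk₀ n (by omega) (fun i' h2' h3' => ih (by omega) i' h2' h3') (b (n+1)) g1)
            · exact g2
        · have e : i = k₀ := by omega
          rw [e]; exact hk₀2
    have T1' : ∀ i, k₀ ≤ i → b i ∈ M.A2 := fun i hi => T1 i hi i hi le_rfl
    have T2 : ∀ τ, k₀ ≤ τ → ∀ c ∈ M.A1, M.D c ≠ {x (τ+1)} :=
      fun τ hτ c hc1 hcD => hk₀ τ hτ (fun i h1 h2 => T1 τ hτ i h1 h2) c hc1 hcD
    have hsex : ∃ σ, ∀ i, σ ≤ i → i ≤ k₀ → b i ∈ M.A2 :=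
      ⟨k₀, fun i h1 h2 => by have e : i = k₀ := le_antisymm h2 h1; rw [e]; exact hk₀2⟩
    set s := Nat.find hsex with hsdef
    have hs_spec := Nat.find_spec hsex
    have hs_le : s ≤ k₀ := Nat.find_le
      (fun i h1 h2 => by have e : i = k₀ := le_antisymm h2 h1; rw [e]; exact hk₀2)
    have hs_run : ∀ i, s ≤ i → b i ∈ M.A2 := by
      intro i hi
      rcases Nat.lt_or_ge i (k₀+1) with h | h
      · exact hs_spec i hi (by omega)
      · exact T1' i (by omega)
    have hs_min : ∀ σ, σ < s → ¬ ∀ i, σ ≤ i → i ≤ k₀ → b i ∈ M.A2 :=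
      fun σ hσ => Nat.find_min hsex hσ
    have hprev : 1 ≤ s → b (s-1) ∈ M.A0 ∪ M.A1 := by
      intro hs1
      have hnot : b (s-1) ∉ M.A2 := by
        intro hA2'
        apply hs_min (s-1) (by omega)
        intro i h1 h2
        rcases Nat.lt_or_ge i s with h | h
        · have e : i = s-1 := by omega
          rw [e]; exact hA2'
        · exact hs_run i h
      rcases M.A_cover (b (s-1)) with h0 | h1 | h2
      · exact Set.mem_union_left _ h0
      · exact Set.mem_union_right _ h1
      · exact absurd h2 hnot
    have hxsR : 1 ≤ s → x s ∈ interior (M.R (b (s-1))) := by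
      intro hs1
      have h := M.snd_mem_int (hprev hs1) (hb (s-1))
      rwa [show s - 1 + 1 = s by omega] at h
    have hpre : ∀ j, j < s → b j ∈ M.Ess := by
      intro j hj
      rcases M.A_cover (b j) with h0 | h1 | h2
      · exact M.ess_of_A0 hpp h0
      · exact M.ess_of_A1 hpp h1
      · have hex2 : ∃ i, j ≤ i ∧ b (i+1) ∉ M.A2 := by
          by_contra hcc
          push_neg at hcc
          apply hs_min j hj
          have hall : ∀ d, b (j+d) ∈ M.A2 := by
            intro d
            induction d with
            | zero => rw [Nat.add_zero]; exact h2
            | succ n ihn =>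
              have hh := hcc (j+n) (by omega)
              rwa [show j+n+1 = j+(n+1) by omega] at hh
          intro i h1 _
          have e : i = j + (i - j) := by omega
          rw [e]; exact hall (i-j)
        set τ := Nat.find hex2 with hτdef
        obtain ⟨hτj, hτnot⟩ := Nat.find_spec hex2
        have hτrun : ∀ i, j ≤ i → i ≤ τ → b i ∈ M.A2 := by
          intro i h1 h3
          rcases eq_or_lt_of_le h1 with e | hlt
          · rw [← e]; exact h2
          · by_contra hno
            exact Nat.find_min hex2 (show i-1 < τ by omega)
              ⟨by omega, by rwa [show i-1+1 = i by omega]⟩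
        have hτ1 : b (τ+1) ∈ M.A1 := by
          rcases M.after_A2 (hτrun τ hτj le_rfl) (hb τ) (hb (τ+1)) with g1 | g2
          · exact g1
          · exact absurd g2 hτnot
        exact hCovEss j τ (b (τ+1)) hτj hτrun hτ1 (M.A1_pair hτ1 (hb (τ+1))).1
    by_cases HF : ∀ n, ∃ E, M.ChainW x s Set.univ n E
    · -- relabel with a free infinite chain from the start of the run
      obtain ⟨E, hE⟩ := M.ChainW_infinite HF
      have hE1 : ∀ i, E i ∈ M.A0 ∧ x (s+i) ∈ M.D (E i) ∧ M.f (E i) (x (s+i)) = x (s+i+1) :=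
        fun i => (hE (i+1)).1 i (by omega)
      have hE2 : ∀ i, M.D (E (i+1)) ⊆ M.R (E i) := fun i => (hE (i+2)).2.1 i (by omega)
      set a : ℕ → M.A := fun j => if j < s then b j else E (j - s) with hadef
      have ha_lt : ∀ j, j < s → a j = b j := by
        intro j hj; simp only [hadef]; rw [if_pos hj]
      have ha_ge : ∀ j, s ≤ j → a j = E (j - s) := by
        intro j hj; simp only [hadef]; rw [if_neg (by omega)]
      refine ⟨a, ⟨?_, ?_⟩, ?_⟩
      · intro kk
        rcases Nat.lt_or_ge (kk+1) s with h1 | h1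
        · rw [ha_lt kk (by omega), ha_lt (kk+1) h1]
          exact hbSFT kk
        · rcases Nat.lt_or_ge kk s with hlt2 | hge2
          · rw [ha_lt kk hlt2, ha_ge (kk+1) h1]
            have e2 : kk + 1 - s = 0 := by omega
            have e3 : kk = s - 1 := by omega
            rw [e2, e3]
            have hjunc : M.D (E 0) ⊆ M.R (b (s-1)) := by
              apply M.D_sub_R_of_mem (hE1 0).1 (hprev (by omega))
              · have hh := (hE1 0).2.1; rwa [Nat.add_zero] at hh
              · exact hxsR (by omega)
            exact M.D0_sub_R0 (hE1 0).1 (hprev (by omega)) hjunc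
          · rw [ha_ge kk hge2, ha_ge (kk+1) (by omega),
              show kk + 1 - s = (kk - s) + 1 by omega]
            exact M.D0_sub_R0 (hE1 _).1 (Set.mem_union_left _ (hE1 _).1) (hE2 (kk-s))
      · intro j
        rcases Nat.lt_or_ge j s with hj | hj
        · rw [ha_lt j hj]; exact hpre j hj
        · rw [ha_ge j hj]; exact M.ess_of_A0 hpp (hE1 (j-s)).1
      · intro j
        rcases Nat.lt_or_ge j s with hj | hj
        · rw [ha_lt j hj]; exact M.G0_sub_Gr _ (hb j)
        · rw [ha_ge j hj, M.Gr_A0 _ (hE1 (j-s)).1]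
          have h1 := (hE1 (j-s)).2.1
          have h2 := (hE1 (j-s)).2.2
          rw [show s + (j-s) = j by omega] at h1 h2
          exact ⟨h1, h2.symm⟩
    · by_cases HEx : ∃ l d, (s + 1 ≤ l ∧ d ∈ M.A1 ∧ M.D d = {x (l-1)} ∧ x l ∈ M.R d) ∧
        ∀ n, ∃ E, M.ChainW x l (M.R d) n E
      · -- relabel using an entry with infinite chain
        obtain ⟨l, d, ⟨hl1, hd1, hdD, hdR⟩, hinf⟩ := HEx
        obtain ⟨E, hE⟩ := M.ChainW_infinite hinf
        have hE1 : ∀ i, E i ∈ M.A0 ∧ x (l+i) ∈ M.D (E i) ∧ M.f (E i) (x (l+i)) = x (l+i+1) :=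
          fun i => (hE (i+1)).1 i (by omega)
        have hE2 : ∀ i, M.D (E (i+1)) ⊆ M.R (E i) := fun i => (hE (i+2)).2.1 i (by omega)
        have hE0W : M.D (E 0) ⊆ M.R d := (hE 1).2.2 (by omega)
        set a : ℕ → M.A := fun j => if j < l - 1 then b j else if j = l - 1 then d else E (j - l)
          with hadef
        have ha_lt : ∀ j, j < l - 1 → a j = b j := by
          intro j hj; simp only [hadef]; rw [if_pos hj]
        have ha_eq : a (l-1) = d := by
          simp only [hadef]
          rw [if_neg (by omega : ¬ (l - 1 < l - 1))]
          simp
        have ha_ge : ∀ j, l ≤ j → a j = E (j - l) := by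
          intro j hj; simp only [hadef]; rw [if_neg (by omega), if_neg (by omega)]
        refine ⟨a, ⟨?_, ?_⟩, ?_⟩
        · intro kk
          rcases Nat.lt_or_ge (kk+1) (l-1) with h1 | h1
          · rw [ha_lt kk (by omega), ha_lt (kk+1) h1]
            exact hbSFT kk
          · rcases Nat.lt_or_ge kk (l-1) with hlt2 | hge2
            · -- kk = l-2, kk+1 = l-1
              have e : kk + 1 = l - 1 := by omega
              rw [ha_lt kk hlt2, e, ha_eq]
              rw [M.D0_A12 d (Set.mem_union_left _ hd1), hdD]
              rcases Nat.lt_or_ge kk s with hks | hks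
              · -- kk = s-1 and l-1 = s
                have es : kk = s - 1 := by omega
                have els : l - 1 = s := by omega
                rw [es, M.R0_A01 _ (hprev (by omega)), els]
                exact Set.singleton_subset_iff.2 (hxsR (by omega))
              · -- b kk ∈ A2
                have hk2 : b kk ∈ M.A2 := hs_run kk hks
                rw [M.R0_A2 _ hk2, (M.A2_pair hk2 (hb kk)).2.1,
                  show kk + 1 = l - 1 from e]
              
            · rcases Nat.lt_or_ge kk l with hlt3 | hge3
              · -- kk = l-1, kk+1 = l
                have h1 : a kk = d := by
                  rw [show kk = l - 1 by omega]; exact ha_eq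
                have h2 : a (kk+1) = E 0 := by
                  rw [ha_ge (kk+1) (by omega), show kk + 1 - l = 0 by omega]
                rw [h1, h2]
                exact M.D0_sub_R0 (hE1 0).1 (Set.mem_union_right _ hd1) hE0W
              · rw [ha_ge kk hge3, ha_ge (kk+1) (by omega),
                  show kk + 1 - l = (kk - l) + 1 by omega]
                exact M.D0_sub_R0 (hE1 _).1 (Set.mem_union_left _ (hE1 _).1) (hE2 (kk-l))
        · intro j
          rcases Nat.lt_or_ge j (l-1) with hj | hj
          · rcases Nat.lt_or_ge j s with hjs | hjs
            · rw [ha_lt j hj]; exact hpre j hjs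
            · -- s ≤ j ≤ l-2 : A2 run to the entry symbol d
              rw [ha_lt j hj]
              have h := (M.ess_of_run hpp hb j (l-1-j) d
                (fun i hi => hs_run (j+i) (by omega)) hd1
                (by rw [show j + (l-1-j) = l-1 by omega]; exact hdD)).1
              have h0 := h 0 (by omega)
              rwa [Nat.add_zero] at h0
          · rcases Nat.lt_or_ge j l with hj2 | hj2
            · have e : j = l - 1 := by omega
              rw [e, ha_eq]
              exact M.ess_of_A1 hpp hd1
            · rw [ha_ge j hj2]
              exact M.ess_of_A0 hpp (hE1 (j-l)).1
        · intro j
          rcases Nat.lt_or_ge j (l-1) with hj | hj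
          · rw [ha_lt j hj]; exact M.G0_sub_Gr _ (hb j)
          · rcases Nat.lt_or_ge j l with hj2 | hj2
            · have e : j = l - 1 := by omega
              rw [e, ha_eq, M.Gr_A12 d (Set.mem_union_left _ hd1)]
              refine ⟨?_, ?_⟩
              · rw [hdD]; rfl
              · rw [show l - 1 + 1 = l by omega]; exact hdR
            · rw [ha_ge j hj2, M.Gr_A0 _ (hE1 (j-l)).1]
              have h1 := (hE1 (j-l)).2.1
              have h2 := (hE1 (j-l)).2.2
              rw [show l + (j-l) = j by omega] at h1 h2
              exact ⟨h1, h2.symm⟩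
      · -- bounded case : keep the label b, essential windows
        push_neg at HF
        obtain ⟨nf, hnf⟩ := HF
        have hNbex : ∀ z : ℕ × M.A, ∃ n,
            ((s + 1 ≤ z.1 ∧ z.2 ∈ M.A1 ∧ M.D z.2 = {x (z.1-1)} ∧ x z.1 ∈ M.R z.2) →
              ¬ ∃ E, M.ChainW x z.1 (M.R z.2) n E) := by
          intro z
          by_cases hz : (s + 1 ≤ z.1 ∧ z.2 ∈ M.A1 ∧ M.D z.2 = {x (z.1-1)} ∧ x z.1 ∈ M.R z.2) ∧
              ∀ n, ∃ E, M.ChainW x z.1 (M.R z.2) n E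
          · exact absurd ⟨z.1, z.2, hz.1, hz.2⟩ HEx
          · by_cases hz1 : s + 1 ≤ z.1 ∧ z.2 ∈ M.A1 ∧ M.D z.2 = {x (z.1-1)} ∧ x z.1 ∈ M.R z.2
            · have : ¬ ∀ n, ∃ E, M.ChainW x z.1 (M.R z.2) n E := fun hcon => hz ⟨hz1, hcon⟩
              push_neg at this
              obtain ⟨n, hn⟩ := this
              exact ⟨n, fun _ h => by obtain ⟨E, hEE⟩ := h; exact hn E hEE⟩
            · exact ⟨0, fun hcond => absurd hcond hz1⟩
        choose Nb hNb using hNbex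
        haveI := Fintype.ofFinite M.A
        set S0 : ℕ := (Finset.range (k₀+2) ×ˢ (Finset.univ : Finset M.A)).sup
          (fun z => Nb z) with hS0
        have hS0le : ∀ l d, l < k₀ + 2 → Nb (l, d) ≤ S0 :=
          fun l d hl => Finset.le_sup (Finset.mem_product.2
            ⟨Finset.mem_range.2 hl, Finset.mem_univ d⟩)
        refine ⟨b, ⟨hbSFT, fun j => ?_⟩, fun i => M.G0_sub_Gr _ (hb i)⟩
        rcases Nat.lt_or_ge j s with hj | hj
        · exact hpre j hj
        · -- essential window containing j
          set k := S0 + nf + (j - s) + k₀ + 2 with hk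
          have hwin : M.EssentialWord (fun i : Fin (k+1) => b (s + (i : ℕ))) := by
            apply M.essential_window hpp hb s k hs_run
            · -- no entry chains
              intro l d hd1 hl1 hl2 hdD hdR hchain
              rcases Nat.lt_or_ge l (k₀+2) with hlk | hlk
              · have hcond : s + 1 ≤ (l, d).1 ∧ (l, d).2 ∈ M.A1 ∧
                    M.D (l, d).2 = {x ((l, d).1-1)} ∧ x (l, d).1 ∈ M.R (l, d).2 :=
                  ⟨hl1, hd1, hdD, hdR⟩
                obtain ⟨E, hEc⟩ := hchain
                exact hNb (l, d) hcond ⟨E, M.ChainW_mono hEc (by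
                  have := hS0le l d hlk
                  omega)⟩
              · -- entry too late : contradicts T2
                exact T2 (l-2) (by omega) d hd1
                  (by rwa [show l - 2 + 1 = l - 1 by omega])
            · -- no free chains
              intro hchain
              obtain ⟨E, hEc⟩ := hchain
              exact hnf E (M.ChainW_mono hEc (by omega))
            · exact M.lang_subword b hbSFT s (k+1)
          refine ⟨k+1, _, hwin, ⟨⟨j - s, by omega⟩, ?_⟩⟩
          show b (s + (j - s)) = b j
          rw [show s + (j - s) = j by omega]
end

section
/- Let F be a properly parametrized Markov multi-map. Given n∈ℕ, if u∈L_n is an essential word and (x,u)∈S_{n+1} is a special labeled finite trajectory, then for every word v∈L_n with v≠u, (x,v) is not a labeled finite trajectory, i.e. (x,v)∉T_{n+1}. -/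
open Set Topology

/-! ### Auxiliary lemmas for the proof of `stmt8` -/

private lemma uIcc_bounds' {a b z : ℝ} (h : z ∈ Set.uIcc a b) :
    min a b ≤ z ∧ z ≤ max a b := by
  rcases Set.mem_uIcc.1 h with h | h
  · exact ⟨le_trans (min_le_left _ _) h.1, le_trans h.2 (le_max_right _ _)⟩
  · exact ⟨le_trans (min_le_right _ _) h.1, le_trans h.2 (le_max_left _ _)⟩

private lemma endpt_not_interior {f : ℝ → ℝ} {c d α β w : ℝ} (hcd : c < d) (hαβ : α < β)
    (hf : ContinuousOn f (Icc c d)) (hbij : Set.BijOn f (Icc c d) (Icc α β))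
    (hw : w ∈ Icc c d) (hwe : w = c ∨ w = d) : f w ∉ Ioo α β := by
  intro hfw
  obtain ⟨pa, hpa, hfpa⟩ := hbij.surjOn (show α ∈ Icc α β from left_mem_Icc.2 hαβ.le)
  obtain ⟨pb, hpb, hfpb⟩ := hbij.surjOn (show β ∈ Icc α β from right_mem_Icc.2 hαβ.le)
  have hpaw : pa ≠ w := by
    intro h; rw [h] at hfpa; rw [hfpa] at hfw; exact lt_irrefl _ hfw.1
  have hpbw : pb ≠ w := by
    intro h; rw [h] at hfpb; rw [hfpb] at hfw; exact lt_irrefl _ hfw.2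
  have hsub : Set.uIcc pa pb ⊆ Icc c d := Set.uIcc_subset_Icc hpa hpb
  have hmem : f w ∈ Set.uIcc (f pa) (f pb) := by
    rw [hfpa, hfpb, Set.uIcc_of_le hαβ.le]
    exact ⟨hfw.1.le, hfw.2.le⟩
  obtain ⟨z', hz'mem, hz'⟩ := intermediate_value_uIcc (hf.mono hsub) hmem
  have hz'w : z' = w := hbij.injOn (hsub hz'mem) hw hz'
  obtain ⟨hlb, hub⟩ := uIcc_bounds' hz'mem
  rcases hwe with h | h
  · have h1 : c < pa := lt_of_le_of_ne hpa.1 (by rw [h] at hpaw; exact Ne.symm hpaw)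
    have h2 : c < pb := lt_of_le_of_ne hpb.1 (by rw [h] at hpbw; exact Ne.symm hpbw)
    have := lt_min h1 h2
    rw [hz'w, h] at hlb; linarith
  · have h1 : pa < d := lt_of_le_of_ne hpa.2 (by rw [h] at hpaw; exact hpaw)
    have h2 : pb < d := lt_of_le_of_ne hpb.2 (by rw [h] at hpbw; exact hpbw)
    have := max_lt h1 h2
    rw [hz'w, h] at hub; linarith

private lemma interior_not_endpt {f : ℝ → ℝ} {c d α β z : ℝ} (hcd : c < d) (hαβ : α < β)
    (hf : ContinuousOn f (Icc c d)) (hbij : Set.BijOn f (Icc c d) (Icc α β))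
    (hzo : z ∈ Ioo c d) : f z ∈ Ioo α β := by
  have hz : z ∈ Icc c d := Ioo_subset_Icc_self hzo
  have hmemc : c ∈ Icc c d := left_mem_Icc.2 hcd.le
  have hmemd : d ∈ Icc c d := right_mem_Icc.2 hcd.le
  have hfzm : f z ∈ Icc α β := hbij.mapsTo hz
  have hfc : f c ≠ f z := fun h =>
    absurd (hbij.injOn hmemc hz h) (by intro hh; rw [← hh] at hzo; exact lt_irrefl _ hzo.1)
  have hfd : f d ≠ f z := fun h =>
    absurd (hbij.injOn hmemd hz h) (by intro hh; rw [← hh] at hzo; exact lt_irrefl _ hzo.2)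
  have hfcm : f c ∈ Icc α β := hbij.mapsTo hmemc
  have hfdm : f d ∈ Icc α β := hbij.mapsTo hmemd
  constructor
  · by_contra hcon
    have hfzα : f z = α := le_antisymm (not_lt.1 hcon) hfzm.1
    have hc' : α < f c := lt_of_le_of_ne hfcm.1 (by rw [← hfzα] at *; exact Ne.symm hfc)
    have hd' : α < f d := lt_of_le_of_ne hfdm.1 (by rw [← hfzα] at *; exact Ne.symm hfd)
    set μ := (α + min (f c) (f d)) / 2 with hμdef
    have hmin := lt_min hc' hd'
    have hμ1 : α < μ := by simp only [hμdef]; linarith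
    have hμ2 : μ < f c := by have := min_le_left (f c) (f d); simp only [hμdef]; linarith
    have hμ3 : μ < f d := by have := min_le_right (f c) (f d); simp only [hμdef]; linarith
    obtain ⟨z1, hz1m, hz1⟩ := intermediate_value_uIcc
      (hf.mono (Set.uIcc_subset_Icc hmemc hz))
      (show μ ∈ Set.uIcc (f c) (f z) by rw [Set.mem_uIcc, hfzα]; right; exact ⟨hμ1.le, hμ2.le⟩)
    obtain ⟨z2, hz2m, hz2⟩ := intermediate_value_uIcc
      (hf.mono (Set.uIcc_subset_Icc hz hmemd))
      (show μ ∈ Set.uIcc (f z) (f d) by rw [Set.mem_uIcc, hfzα]; left; exact ⟨hμ1.le, hμ3.le⟩)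
    have hz1m' : z1 ∈ Icc c z := by rwa [Set.uIcc_of_le hzo.1.le] at hz1m
    have hz2m' : z2 ∈ Icc z d := by rwa [Set.uIcc_of_le hzo.2.le] at hz2m
    have hz1z : z1 < z := lt_of_le_of_ne hz1m'.2
      (by intro h; rw [h, hfzα] at hz1; linarith)
    have hz2z : z < z2 := lt_of_le_of_ne hz2m'.1
      (by intro h; rw [← h, hfzα] at hz2; linarith)
    have heq : z1 = z2 := hbij.injOn (Icc_subset_Icc le_rfl hz.2 hz1m')
      (Icc_subset_Icc hz.1 le_rfl hz2m') (hz1.trans hz2.symm)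
    linarith
  · by_contra hcon
    have hfzβ : f z = β := le_antisymm hfzm.2 (not_lt.1 hcon)
    have hc' : f c < β := lt_of_le_of_ne hfcm.2 (by rw [← hfzβ] at *; exact hfc)
    have hd' : f d < β := lt_of_le_of_ne hfdm.2 (by rw [← hfzβ] at *; exact hfd)
    set μ := (max (f c) (f d) + β) / 2 with hμdef
    have hmax := max_lt hc' hd'
    have hμ1 : μ < β := by simp only [hμdef]; linarith
    have hμ2 : f c < μ := by have := le_max_left (f c) (f d); simp only [hμdef]; linarith
    have hμ3 : f d < μ := by have := le_max_right (f c) (f d); simp only [hμdef]; linarith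
    obtain ⟨z1, hz1m, hz1⟩ := intermediate_value_uIcc
      (hf.mono (Set.uIcc_subset_Icc hmemc hz))
      (show μ ∈ Set.uIcc (f c) (f z) by rw [Set.mem_uIcc, hfzβ]; left; exact ⟨hμ2.le, hμ1.le⟩)
    obtain ⟨z2, hz2m, hz2⟩ := intermediate_value_uIcc
      (hf.mono (Set.uIcc_subset_Icc hz hmemd))
      (show μ ∈ Set.uIcc (f z) (f d) by rw [Set.mem_uIcc, hfzβ]; right; exact ⟨hμ3.le, hμ1.le⟩)
    have hz1m' : z1 ∈ Icc c z := by rwa [Set.uIcc_of_le hzo.1.le] at hz1m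
    have hz2m' : z2 ∈ Icc z d := by rwa [Set.uIcc_of_le hzo.2.le] at hz2m
    have hz1z : z1 < z := lt_of_le_of_ne hz1m'.2
      (by intro h; rw [h, hfzβ] at hz1; linarith)
    have hz2z : z < z2 := lt_of_le_of_ne hz2m'.1
      (by intro h; rw [← h, hfzβ] at hz2; linarith)
    have heq : z1 = z2 := hbij.injOn (Icc_subset_Icc le_rfl hz.2 hz1m')
      (Icc_subset_Icc hz.1 le_rfl hz2m') (hz1.trans hz2.symm)
    linarith

private lemma bij_Ioo {f : ℝ → ℝ} {c d α β : ℝ} (hcd : c < d) (hαβ : α < β)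
    (hf : ContinuousOn f (Icc c d)) (hbij : Set.BijOn f (Icc c d) (Icc α β))
    {z : ℝ} (hz : z ∈ Icc c d) : f z ∈ Ioo α β ↔ z ∈ Ioo c d := by
  constructor
  · intro hfz
    refine ⟨lt_of_le_of_ne hz.1 ?_, lt_of_le_of_ne hz.2 ?_⟩
    · intro h; exact endpt_not_interior hcd hαβ hf hbij hz (Or.inl h.symm) hfz
    · intro h; exact endpt_not_interior hcd hαβ hf hbij hz (Or.inr h) hfz
  · exact interior_not_endpt hcd hαβ hf hbij

private lemma trans_lem {α β c d ξ z : ℝ} (hcd : c < d) (hsub : Ioo c d ⊆ Ioo α β)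
    (hξR : ξ = α ∨ ξ = β) (hξD : ξ = c ∨ ξ = d) (hz : z ∈ Ioo α β)
    (hclose : |z - ξ| < d - c) : z ∈ Ioo c d := by
  have hm : (c + d) / 2 ∈ Ioo c d := ⟨by linarith, by linarith⟩
  have hm' := hsub hm
  rw [abs_lt] at hclose
  obtain ⟨hc1, hc2⟩ := hclose
  obtain ⟨ha1, ha2⟩ := hz
  obtain ⟨hb1, hb2⟩ := hm
  obtain ⟨hb3, hb4⟩ := hm'
  rcases hξD with h | h <;> rcases hξR with h' | h' <;>
    exact ⟨by linarith, by linarith⟩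

namespace MarkovMultiMap

variable {M : MarkovMultiMap}

private lemma A0_pack {a : M.A} (ha : a ∈ M.A0) :
    ∃ c d α β : ℝ, c < d ∧ α < β ∧ M.D a = Icc c d ∧ M.R a = Icc α β ∧
      M.D0 a = Ioo c d ∧ M.R0 a = Ioo α β ∧
      ContinuousOn (M.f a) (Icc c d) ∧ Set.BijOn (M.f a) (Icc c d) (Icc α β) ∧
      c ∈ M.P ∧ d ∈ M.P ∧ α ∈ M.P ∧ β ∈ M.P ∧ (∀ r ∈ M.P, ¬(c < r ∧ r < d)) := by
  obtain ⟨c, hcP, d, hdP, hcd, hPno, hD⟩ := M.D_A0 a ha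
  obtain ⟨α, hαP, β, hβP, hαβ, hR⟩ := M.R_A0 a ha
  refine ⟨c, d, α, β, hcd, hαβ, hD, hR, ?_, ?_, ?_, ?_, hcP, hdP, hαP, hβP, hPno⟩
  · rw [M.D0_A0 a ha, hD, interior_Icc]
  · rw [M.R0_A01 a (Set.mem_union_left _ ha), hR, interior_Icc]
  · have := (M.f_homeo a ha).1; rwa [hD] at this
  · have := (M.f_homeo a ha).2; rwa [hD, hR] at this

private lemma A12_pack {a : M.A} (ha : a ∈ M.A1 ∪ M.A2) :
    ∃ p : ℝ, p ∈ M.P ∧ M.D a = {p} ∧ M.D0 a = {p} := by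
  obtain ⟨p, hp, hD⟩ := M.D_A12 a ha
  exact ⟨p, hp, hD, by rw [M.D0_A12 a ha, hD]⟩

private lemma A1_pack {a : M.A} (ha : a ∈ M.A1) :
    ∃ α β : ℝ, α < β ∧ α ∈ M.P ∧ β ∈ M.P ∧ M.R a = Icc α β ∧ M.R0 a = Ioo α β ∧
      Icc α β ∩ (M.P : Set ℝ) = {α, β} := by
  obtain ⟨α, hαP, β, hβP, hαβ, hR, hRP⟩ := M.R_A1 a ha
  refine ⟨α, β, hαβ, hαP, hβP, hR, ?_, hRP⟩
  rw [M.R0_A01 a (Set.mem_union_right _ ha), hR, interior_Icc]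

private lemma A2_pack {a : M.A} (ha : a ∈ M.A2) :
    ∃ ρ : ℝ, ρ ∈ M.P ∧ M.R a = {ρ} ∧ M.R0 a = {ρ} := by
  obtain ⟨ρ, hρ, hR⟩ := M.R_A2 a ha
  exact ⟨ρ, hρ, hR, by rw [M.R0_A2 a ha, hR]⟩

private lemma unit_of_P {r : ℝ} (hr : r ∈ M.P) : r ∈ Icc (0:ℝ) 1 :=
  M.P_sub (Finset.mem_coe.2 hr)

private lemma mem_GF_of_Gr {a : M.A} {p : ℝ × ℝ} (h : p ∈ M.Gr a) : p ∈ M.GF :=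
  Set.mem_iUnion.2 ⟨a, h⟩

end MarkovMultiMap

private lemma hIccIoo {lo hi t : ℝ} (h1 : t ∈ Icc lo hi) (h2 : t ∉ Ioo lo hi) :
    t = lo ∨ t = hi := by
  rcases eq_or_lt_of_le h1.1 with h | h
  · exact Or.inl h.symm
  · rcases eq_or_lt_of_le h1.2 with h' | h'
    · exact Or.inr h'
    · exact absurd ⟨h, h'⟩ h2

private lemma opposite_sides {g : ℝ → ℝ} {x0 δJ : ℝ} (hδJ : 0 < δJ)
    (hcont : ContinuousOn g (Icc (x0 - δJ) (x0 + δJ)))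
    (hinj : Set.InjOn g (Icc (x0 - δJ) (x0 + δJ))) :
    (g (x0 + δJ) < g x0 ∧ g x0 < g (x0 - δJ)) ∨
    (g (x0 - δJ) < g x0 ∧ g x0 < g (x0 + δJ)) := by
  have hx0 : x0 ∈ Icc (x0 - δJ) (x0 + δJ) := ⟨by linarith, by linarith⟩
  have hm : x0 - δJ ∈ Icc (x0 - δJ) (x0 + δJ) := ⟨le_refl _, by linarith⟩
  have hp : x0 + δJ ∈ Icc (x0 - δJ) (x0 + δJ) := ⟨by linarith, le_refl _⟩
  have hAne : g (x0 - δJ) ≠ g x0 := fun h => by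
    have := hinj hm hx0 h; linarith [this]
  have hBne : g (x0 + δJ) ≠ g x0 := fun h => by
    have := hinj hp hx0 h; linarith [this]
  have hnb : ¬ (g (x0 - δJ) < g x0 ∧ g (x0 + δJ) < g x0) := by
    rintro ⟨h1, h2⟩
    set τ := (max (g (x0 - δJ)) (g (x0 + δJ)) + g x0) / 2 with hτdef
    have hτ1 : g (x0 - δJ) < τ := by
      have := le_max_left (g (x0 - δJ)) (g (x0 + δJ)); have := max_lt h1 h2
      simp only [hτdef]; linarith
    have hτ2 : g (x0 + δJ) < τ := by
      have := le_max_right (g (x0 - δJ)) (g (x0 + δJ)); have := max_lt h1 h2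
      simp only [hτdef]; linarith
    have hτ3 : τ < g x0 := by
      have := max_lt h1 h2; simp only [hτdef]; linarith
    obtain ⟨z1, hz1m, hz1⟩ := intermediate_value_uIcc
      (hcont.mono (Set.uIcc_subset_Icc hm hx0))
      (show τ ∈ Set.uIcc (g (x0 - δJ)) (g x0) by
        rw [Set.mem_uIcc]; left; exact ⟨hτ1.le, hτ3.le⟩)
    obtain ⟨z2, hz2m, hz2⟩ := intermediate_value_uIcc
      (hcont.mono (Set.uIcc_subset_Icc hx0 hp))
      (show τ ∈ Set.uIcc (g x0) (g (x0 + δJ)) by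
        rw [Set.mem_uIcc]; right; exact ⟨hτ2.le, hτ3.le⟩)
    have hz1m' : z1 ∈ Icc (x0 - δJ) x0 := by
      rwa [Set.uIcc_of_le (by linarith : x0 - δJ ≤ x0)] at hz1m
    have hz2m' : z2 ∈ Icc x0 (x0 + δJ) := by
      rwa [Set.uIcc_of_le (by linarith : x0 ≤ x0 + δJ)] at hz2m
    have hz1ne : z1 ≠ x0 := fun h => by rw [h] at hz1; linarith
    have hz2ne : z2 ≠ x0 := fun h => by rw [h] at hz2; linarith
    have h12 : z1 = z2 := hinj (Icc_subset_Icc le_rfl (by linarith) hz1m')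
      (Icc_subset_Icc (by linarith) le_rfl hz2m') (hz1.trans hz2.symm)
    have : z1 < x0 := lt_of_le_of_ne hz1m'.2 hz1ne
    have : x0 < z2 := lt_of_le_of_ne hz2m'.1 (Ne.symm hz2ne)
    linarith
  have hnc : ¬ (g x0 < g (x0 - δJ) ∧ g x0 < g (x0 + δJ)) := by
    rintro ⟨h1, h2⟩
    set τ := (g x0 + min (g (x0 - δJ)) (g (x0 + δJ))) / 2 with hτdef
    have hτ1 : τ < g (x0 - δJ) := by
      have := min_le_left (g (x0 - δJ)) (g (x0 + δJ)); have := lt_min h1 h2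
      simp only [hτdef]; linarith
    have hτ2 : τ < g (x0 + δJ) := by
      have := min_le_right (g (x0 - δJ)) (g (x0 + δJ)); have := lt_min h1 h2
      simp only [hτdef]; linarith
    have hτ3 : g x0 < τ := by
      have := lt_min h1 h2; simp only [hτdef]; linarith
    obtain ⟨z1, hz1m, hz1⟩ := intermediate_value_uIcc
      (hcont.mono (Set.uIcc_subset_Icc hm hx0))
      (show τ ∈ Set.uIcc (g (x0 - δJ)) (g x0) by
        rw [Set.mem_uIcc]; right; exact ⟨hτ3.le, hτ1.le⟩)
    obtain ⟨z2, hz2m, hz2⟩ := intermediate_value_uIcc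
      (hcont.mono (Set.uIcc_subset_Icc hx0 hp))
      (show τ ∈ Set.uIcc (g x0) (g (x0 + δJ)) by
        rw [Set.mem_uIcc]; left; exact ⟨hτ3.le, hτ2.le⟩)
    have hz1m' : z1 ∈ Icc (x0 - δJ) x0 := by
      rwa [Set.uIcc_of_le (by linarith : x0 - δJ ≤ x0)] at hz1m
    have hz2m' : z2 ∈ Icc x0 (x0 + δJ) := by
      rwa [Set.uIcc_of_le (by linarith : x0 ≤ x0 + δJ)] at hz2m
    have hz1ne : z1 ≠ x0 := fun h => by rw [h] at hz1; linarith
    have hz2ne : z2 ≠ x0 := fun h => by rw [h] at hz2; linarith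
    have h12 : z1 = z2 := hinj (Icc_subset_Icc le_rfl (by linarith) hz1m')
      (Icc_subset_Icc (by linarith) le_rfl hz2m') (hz1.trans hz2.symm)
    have : z1 < x0 := lt_of_le_of_ne hz1m'.2 hz1ne
    have : x0 < z2 := lt_of_le_of_ne hz2m'.1 (Ne.symm hz2ne)
    linarith
  rcases lt_or_gt_of_ne hAne with hA | hA <;> rcases lt_or_gt_of_ne hBne with hB | hB
  · exact absurd ⟨hA, hB⟩ hnb
  · exact Or.inr ⟨hA, hB⟩
  · exact Or.inl ⟨hB, hA⟩
  · exact absurd ⟨hA, hB⟩ hnc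

set_option maxHeartbeats 1600000 in
/-- If `u ∈ L_{n+1}` is essential and `(x,u)` is a special labeled finite trajectory,
then no other word `v ∈ L_{n+1}` labels `x`. -/
theorem stmt8 (M : MarkovMultiMap) (hpp : M.ProperlyParametrized)
    (n : ℕ) (u : Fin (n + 1) → M.A) (hu : M.EssentialWord u)
    (x : Fin (n + 2) → ℝ) (hx : x ∈ M.finTraj (n + 2)) (hsp : M.SpecialLabeled x u) :
    ∀ v : Fin (n + 1) → M.A, v ∈ M.Lang (n + 1) → v ≠ u → ¬ M.Labeled x v := by
  intro v hvL hvne hvlab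
  classical
  -- ℕ-indexed views of the data
  set X : ℕ → ℝ := fun k => x ⟨min k (n+1), by omega⟩ with hXdef
  set U : ℕ → M.A := fun k => u ⟨min k n, by omega⟩ with hUdef
  set V : ℕ → M.A := fun k => v ⟨min k n, by omega⟩ with hVdef
  have hXk : ∀ k, k ≤ n + 1 → ∀ (h : k < n + 2), X k = x ⟨k, h⟩ := by
    intro k hk h
    simp only [hXdef]
    congr 1
    exact Fin.ext (by simp [Nat.min_eq_left hk])
  have hUk : ∀ k, k ≤ n → ∀ (h : k < n + 1), U k = u ⟨k, h⟩ := by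
    intro k hk h
    simp only [hUdef]
    congr 1
    exact Fin.ext (by simp [Nat.min_eq_left hk])
  have hVk : ∀ k, k ≤ n → ∀ (h : k < n + 1), V k = v ⟨k, h⟩ := by
    intro k hk h
    simp only [hVdef]
    congr 1
    exact Fin.ext (by simp [Nat.min_eq_left hk])
  have hXbox : ∀ k, X k ∈ Icc (0:ℝ) 1 := fun k => hx.1 _
  have hG0 : ∀ k, k ≤ n → (X k, X (k+1)) ∈ M.G0 (U k) := by
    intro k hk
    have h := hsp ⟨k, by omega⟩
    rw [hXk k (by omega) (by omega), hXk (k+1) (by omega) (by omega),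
        hUk k hk (by omega)]
    exact h
  have hGr : ∀ k, k ≤ n → (X k, X (k+1)) ∈ M.Gr (V k) := by
    intro k hk
    have h := hvlab ⟨k, by omega⟩
    rw [hXk k (by omega) (by omega), hXk (k+1) (by omega) (by omega),
        hVk k hk (by omega)]
    exact h
  -- language conditions
  obtain ⟨zu, hzu, mu, hzmu⟩ := hu.1
  have hLu : ∀ k, k + 1 ≤ n → M.D0 (U (k+1)) ⊆ M.R0 (U k) := by
    intro k hk
    rw [hUk (k+1) hk (by omega), hUk k (by omega) (by omega),
        hzmu ⟨k+1, by omega⟩, hzmu ⟨k, by omega⟩]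
    have h := hzu (mu + k)
    simpa [Nat.add_assoc] using h
  obtain ⟨zv, hzv, mv, hzmv⟩ := hvL
  have hLv : ∀ k, k + 1 ≤ n → M.D0 (V (k+1)) ⊆ M.R0 (V k) := by
    intro k hk
    rw [hVk (k+1) hk (by omega), hVk k (by omega) (by omega),
        hzmv ⟨k+1, by omega⟩, hzmv ⟨k, by omega⟩]
    have h := hzv (mv + k)
    simpa [Nat.add_assoc] using h
  -- minimal differing index
  have hex : ∃ k, k ≤ n ∧ V k ≠ U k := by
    obtain ⟨a, ha⟩ := Function.ne_iff.1 hvne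
    refine ⟨a.1, by omega, ?_⟩
    rw [hUk a.1 (by omega) (by omega), hVk a.1 (by omega) (by omega)]
    simpa [Fin.eta] using ha
  set i := Nat.find hex with hidef
  obtain ⟨hin, hine⟩ : i ≤ n ∧ V i ≠ U i := Nat.find_spec hex
  have himin : ∀ k, k < i → k ≤ n → V k = U k := by
    intro k hk hkn
    have := Nat.find_min hex hk
    push_neg at this
    exact this hkn
  -- extract a ball from openness
  obtain ⟨ε₀, hε₀, hball⟩ := Metric.isOpen_iff.1 hu.2 ⟨x, hx⟩ hsp
  -- the main construction
  have main : ∀ ε : ℝ, 0 < ε → ∃ Y : ℕ → ℝ,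
      (∀ k, k ≤ n+1 → |Y k - X k| < ε ∧ Y k ∈ Icc (0:ℝ) 1) ∧
      (∀ k, k ≤ n → (Y k, Y (k+1)) ∈ M.GF) ∧
      (Y i, Y (i+1)) ∉ M.G0 (U i) := by
    intro ε hε
    have hqG0 := hG0 i hin
    have hqGr := hGr i hin
    have hqnotv : (X i, X (i+1)) ∉ M.G0 (V i) := fun hmem =>
      Set.disjoint_left.1 (hpp.2 (V i) (U i) hine) hmem hqG0
    -- structure of `v` above a non-interior range point
    have step : ∀ k, k + 1 ≤ n → X (k+1) ∉ M.R0 (V k) →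
        V (k+1) ∈ M.A0 ∧ X (k+1) ∈ M.D (V (k+1)) ∧ X (k+1) ∉ M.D0 (V (k+1)) ∧
        X (k+2) ∉ M.R0 (V (k+1)) := by
      intro k hk hnot
      have hDsub := hLv k hk
      have hGr' := hGr (k+1) hk
      have hnotD0 : X (k+1) ∉ M.D0 (V (k+1)) := fun h => hnot (hDsub h)
      rcases M.A_cover (V (k+1)) with h0 | h1 | h2
      · obtain ⟨c, d, α, β, hcd, hαβ, hD, hR, hD0, hR0, hfc, hfb, -, -, -, -, -⟩ :=
          MarkovMultiMap.A0_pack h0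
        rw [M.Gr_A0 _ h0] at hGr'
        obtain ⟨hmem, hfx⟩ := hGr'
        have hmem' : X (k+1) ∈ M.D (V (k+1)) := hmem
        have hfx' : X (k+2) = M.f (V (k+1)) (X (k+1)) := hfx
        refine ⟨h0, hmem', hnotD0, ?_⟩
        rw [hR0]
        intro hcon
        apply hnotD0
        rw [hD0]
        have hmem'' : X (k+1) ∈ Icc c d := by rwa [hD] at hmem'
        exact (bij_Ioo hcd hαβ hfc hfb hmem'').1 (by rwa [hfx'] at hcon)
      · exfalso
        obtain ⟨p, hpP, hD', hD0'⟩ := MarkovMultiMap.A12_pack (Set.mem_union_left _ h1)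
        rw [M.Gr_A12 _ (Set.mem_union_left _ h1)] at hGr'
        exact hnotD0 (by rw [hD0']; rw [hD'] at hGr'; exact hGr'.1)
      · exfalso
        obtain ⟨p, hpP, hD', hD0'⟩ := MarkovMultiMap.A12_pack (Set.mem_union_right _ h2)
        rw [M.Gr_A12 _ (Set.mem_union_right _ h2)] at hGr'
        exact hnotD0 (by rw [hD0']; rw [hD'] at hGr'; exact hGr'.1)
    have CC : X (i+1) ∉ M.R0 (V i) → ∀ m, i + m ≤ n →
        (0 < m → V (i+m) ∈ M.A0 ∧ X (i+m) ∈ M.D (V (i+m)) ∧ X (i+m) ∉ M.D0 (V (i+m))) ∧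
        X (i+m+1) ∉ M.R0 (V (i+m)) := by
      intro hbase m
      induction m with
      | zero => intro _; exact ⟨fun h0 => absurd h0 (lt_irrefl 0), hbase⟩
      | succ m ih =>
        intro h
        have hprev := (ih (by omega)).2
        have hs := step (i+m) (by omega) hprev
        exact ⟨fun _ => ⟨hs.1, hs.2.1, hs.2.2.1⟩, hs.2.2.2⟩
    have HcOf1 : X (i+1) ∉ M.R0 (V i) → ∀ k, i+1 ≤ k → k ≤ n →
        V k ∈ M.A0 ∧ X k ∈ M.D (V k) ∧ X k ∉ M.D0 (V k) ∧ X (k+1) ∉ M.R0 (V k) := by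
      intro hbase k hk hk'
      have h' := CC hbase (k - i) (by omega)
      rw [show i + (k - i) = k from by omega] at h'
      obtain ⟨h1, h2, h3⟩ := h'.1 (by omega)
      exact ⟨h1, h2, h3, h'.2⟩
    -- The forward construction along `v`
    have UP : ∀ m : ℕ, ∀ j, n + 1 ≤ j + m →
        (∀ k, j ≤ k → k ≤ n → V k ∈ M.A0 ∧ X k ∈ M.D (V k) ∧ X k ∉ M.D0 (V k) ∧
          X (k+1) ∉ M.R0 (V k)) →
        ∀ ε' : ℝ, 0 < ε' → ∃ δ : ℝ, 0 < δ ∧ ∀ w, |w - X j| < δ → w ∈ Icc (0:ℝ) 1 →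
          (j ≤ n → w ∈ M.D0 (V j)) →
          ∃ zt : ℕ → ℝ, zt j = w ∧
            (∀ k, j ≤ k → k ≤ n → (zt k, zt (k+1)) ∈ M.Gr (V k)) ∧
            (∀ k, j ≤ k → k ≤ n + 1 → |zt k - X k| < ε' ∧ zt k ∈ Icc (0:ℝ) 1) := by
      intro m
      induction m with
      | zero =>
        intro j hj _ ε' hε'
        refine ⟨ε', hε', fun w hw hwu _ => ⟨fun _ => w, rfl, ?_, ?_⟩⟩
        · intro k hk hk'; exact absurd hk' (by omega)
        · intro k hk hk'
          have hkj : k = j := by omega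
          subst hkj
          exact ⟨hw, hwu⟩
      | succ m ih =>
        intro j hj Hc ε' hε'
        by_cases hjn : n + 1 ≤ j
        · refine ⟨ε', hε', fun w hw hwu _ => ⟨fun _ => w, rfl, ?_, ?_⟩⟩
          · intro k hk hk'; exact absurd hk' (by omega)
          · intro k hk hk'
            have hkj : k = j := by omega
            subst hkj
            exact ⟨hw, hwu⟩
        · have hjn' : j ≤ n := by omega
          obtain ⟨hv0, hxD, hxnD0, hxnR0⟩ := Hc j le_rfl hjn'
          obtain ⟨c, d, α, β, hcd, hαβ, hD, hR, hD0, hR0, hfc, hfb, hcP, hdP, hαP, hβP, -⟩ :=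
            MarkovMultiMap.A0_pack hv0
          have hfXj : X (j+1) = M.f (V j) (X j) := by
            have h := hGr j hjn'
            rw [M.Gr_A0 _ hv0] at h
            exact h.2
          have hXjD : X j ∈ Icc c d := by rw [← hD]; exact hxD
          have hunit : Ioo α β ⊆ Icc (0:ℝ) 1 := fun z hz =>
            ⟨le_trans (MarkovMultiMap.unit_of_P hαP).1 hz.1.le,
             le_trans hz.2.le (MarkovMultiMap.unit_of_P hβP).2⟩
          have hmarg : ∃ γ : ℝ, 0 < γ ∧ ∀ w', w' ∈ M.R0 (V j) → |w' - X (j+1)| < γ →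
              w' ∈ Icc (0:ℝ) 1 ∧ (j + 1 ≤ n → w' ∈ M.D0 (V (j+1))) := by
            by_cases hj1 : j + 1 ≤ n
            · obtain ⟨hv0', hxD', hxnD0', -⟩ := Hc (j+1) (by omega) hj1
              obtain ⟨c2, d2, α2, β2, hcd2, hαβ2, hD2, hR2, hD02, hR02, -, -, -, -, -, -, -⟩ :=
                MarkovMultiMap.A0_pack hv0'
              refine ⟨d2 - c2, by linarith, fun w' hw' hclose => ?_⟩
              have hw'I : w' ∈ Ioo α β := by rwa [hR0] at hw'
              have hsub2 : Ioo c2 d2 ⊆ Ioo α β := by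
                rw [← hD02, ← hR0]; exact hLv j hj1
              have hξR : X (j+1) = α ∨ X (j+1) = β := by
                refine hIccIoo ?_ ?_
                · rw [hfXj]; exact hfb.mapsTo hXjD
                · rw [← hR0]; exact hxnR0
              have hξD : X (j+1) = c2 ∨ X (j+1) = d2 := by
                refine hIccIoo ?_ ?_
                · rw [← hD2]; exact hxD'
                · rw [← hD02]; exact hxnD0'
              have hres := trans_lem hcd2 hsub2 hξR hξD hw'I hclose
              exact ⟨hunit hw'I, fun _ => by rw [hD02]; exact hres⟩
            · exact ⟨1, one_pos, fun w' hw' _ =>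
                ⟨hunit (by rwa [hR0] at hw'), fun h => absurd h hj1⟩⟩
          obtain ⟨γ, hγ, hγP⟩ := hmarg
          obtain ⟨δ1, hδ1, ih'⟩ := ih (j+1) (by omega)
            (fun k hk hk' => Hc k (by omega) hk') ε' hε'
          have hcw : ContinuousWithinAt (M.f (V j)) (Icc c d) (X j) :=
            hfc.continuousWithinAt hXjD
          obtain ⟨δ2, hδ2, hδ2P⟩ := Metric.continuousWithinAt_iff.1 hcw
            (min ε' (min δ1 γ)) (by positivity)
          refine ⟨min δ2 ε', by positivity, ?_⟩
          intro w hw hwu hwD0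
          have hwD0' : w ∈ Ioo c d := by rw [← hD0]; exact hwD0 hjn'
          have hwD : w ∈ Icc c d := Ioo_subset_Icc_self hwD0'
          have hfw := hδ2P hwD
            (by rw [Real.dist_eq]; exact lt_of_lt_of_le hw (min_le_left _ _))
          rw [Real.dist_eq, ← hfXj] at hfw
          have hfwR0 : M.f (V j) w ∈ M.R0 (V j) := by
            rw [hR0]; exact interior_not_endpt hcd hαβ hfc hfb hwD0'
          obtain ⟨hfwu, hfwD0⟩ := hγP _ hfwR0
            (lt_of_lt_of_le hfw (le_trans (min_le_right _ _) (min_le_right _ _)))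
          obtain ⟨zt', hzt'0, hzt'e, hzt'c⟩ := ih' (M.f (V j) w)
            (lt_of_lt_of_le hfw (le_trans (min_le_right _ _) (min_le_left _ _))) hfwu hfwD0
          refine ⟨fun k => if k = j then w else zt' k, by simp, ?_, ?_⟩
          · intro k hk hk'
            show ((if k = j then w else zt' k), (if k + 1 = j then w else zt' (k+1))) ∈ M.Gr (V k)
            by_cases hkj : k = j
            · subst hkj
              rw [if_pos rfl, if_neg (by omega : ¬ k + 1 = k)]
              rw [M.Gr_A0 _ hv0, hzt'0]
              exact ⟨by rw [hD]; exact hwD, rfl⟩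
            · rw [if_neg hkj, if_neg (by omega)]
              exact hzt'e k (by omega) hk'
          · intro k hk hk'
            show |(if k = j then w else zt' k) - X k| < ε' ∧ (if k = j then w else zt' k) ∈ Icc (0:ℝ) 1
            by_cases hkj : k = j
            · subst hkj
              rw [if_pos rfl]
              exact ⟨lt_of_lt_of_le hw (min_le_right _ _), hwu⟩
            · rw [if_neg hkj]
              exact hzt'c k (by omega) hk'
    rcases M.A_cover (V i) with hv0 | hv1 | hv2
    · -- case (c) : V i ∈ A0
      have hD0unit : ∀ a, a ∈ M.A0 → M.D0 a ⊆ Icc (0:ℝ) 1 := by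
        intro a ha
        obtain ⟨c', d', -, -, -, -, -, -, hD0', -, -, -, hc'P, hd'P, -, -, -⟩ :=
          MarkovMultiMap.A0_pack ha
        rw [hD0']
        intro z hz
        exact ⟨le_trans (MarkovMultiMap.unit_of_P hc'P).1 hz.1.le,
          le_trans hz.2.le (MarkovMultiMap.unit_of_P hd'P).2⟩
      obtain ⟨c, d, α, β, hcd, hαβ, hD, hR, hD0, hR0, hfc, hfb, hcP, hdP, hαP, hβP, hPno⟩ :=
        MarkovMultiMap.A0_pack hv0
      have hq : X i ∈ Icc c d ∧ X (i+1) = M.f (V i) (X i) := by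
        have h := hqGr
        rw [M.Gr_A0 _ hv0] at h
        have h1 : X i ∈ M.D (V i) := h.1
        have h2 : X (i+1) = M.f (V i) (X i) := h.2
        rw [hD] at h1
        exact ⟨h1, h2⟩
      have hxinD0 : X i ∉ Ioo c d := by
        intro hmem
        exact hqnotv (by rw [M.G0_A0 _ hv0, hD0]; exact ⟨hmem, hq.2⟩)
      have hxiend : X i = c ∨ X i = d := hIccIoo hq.1 hxinD0
      have hXiP : X i ∈ M.P := by rcases hxiend with h | h <;> rw [h] <;> assumption
      have hu12 : U i ∈ M.A1 ∪ M.A2 := by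
        rcases M.A_cover (U i) with hu0 | hu1 | hu2
        · exfalso
          obtain ⟨c', d', -, -, -, -, -, -, hD0', -, -, -, -, -, -, -, hPno'⟩ :=
            MarkovMultiMap.A0_pack hu0
          have hmem : X i ∈ M.D0 (U i) := by
            have h := hqG0; rw [M.G0_A0 _ hu0] at h; exact h.1
          rw [hD0'] at hmem
          exact hPno' _ hXiP ⟨hmem.1, hmem.2⟩
        · exact Set.mem_union_left _ hu1
        · exact Set.mem_union_right _ hu2
      obtain ⟨pu, hpuP, hDu, hD0u⟩ := MarkovMultiMap.A12_pack hu12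
      have hqfst : pu = X i := by
        rcases hu12 with hu1 | hu2
        · have h := hqG0; rw [M.G0_A1 _ hu1, hDu] at h
          exact (h.1).symm
        · have h := hqG0
          rw [M.G0_A2 _ hu2, M.Gr_A12 _ (Set.mem_union_right _ hu2), hDu] at h
          exact (h.1).symm
      have hbase : X (i+1) ∉ M.R0 (V i) := by
        rw [hq.2, hR0]
        intro hcon
        exact hxinD0 ((bij_Ioo hcd hαβ hfc hfb hq.1).1 hcon)
      have Hc : ∀ k, i ≤ k → k ≤ n → V k ∈ M.A0 ∧ X k ∈ M.D (V k) ∧ X k ∉ M.D0 (V k) ∧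
          X (k+1) ∉ M.R0 (V k) := by
        intro k hk hk'
        rcases eq_or_lt_of_le hk with heq | hlt
        · rw [← heq]
          exact ⟨hv0, by rw [hD]; exact hq.1, by rw [hD0]; exact hxinD0, hbase⟩
        · exact HcOf1 hbase k (by omega) hk'
      obtain ⟨δ, hδ, hUPa⟩ := UP (n+1) i (by omega) Hc ε hε
      have hδε : 0 < min δ ε := lt_min hδ hε
      have hG0fst : ∀ q : ℝ × ℝ, q ∈ M.G0 (U i) → q.1 = X i := by
        intro q hq'
        rcases hu12 with hu1 | hu2
        · rw [M.G0_A1 _ hu1, hDu] at hq'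
          rw [← hqfst]; exact hq'.1
        · rw [M.G0_A2 _ hu2, M.Gr_A12 _ (Set.mem_union_right _ hu2), hDu] at hq'
          rw [← hqfst]; exact hq'.1
      -- the backward construction
      have DOWN : ∃ zd : ℕ → ℝ, zd i ∈ Ioo c d ∧
          (∀ k, k < i → (zd k, zd (k+1)) ∈ M.GF) ∧
          (∀ k, k ≤ i → |zd k - X k| < min δ ε ∧ zd k ∈ Icc (0:ℝ) 1) := by
        -- start of the maximal A0-chain below i
        have hsex : ∃ t, t ≤ i ∧ ∀ k, t ≤ k → k < i → U k ∈ M.A0 :=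
          ⟨i, le_rfl, fun k hk hk' => absurd hk' (by omega)⟩
        have hsex2 : ∃ s, (s ≤ i ∧ ∀ k, s ≤ k → k < i → U k ∈ M.A0) ∧
            (1 ≤ s → U (s-1) ∉ M.A0) := by
          refine ⟨Nat.find hsex, Nat.find_spec hsex, ?_⟩
          intro hs1 hcon
          have hfs := (Nat.find_spec hsex).1
          have hmin := Nat.find_min hsex (show Nat.find hsex - 1 < Nat.find hsex by omega)
          push_neg at hmin
          obtain ⟨k, hk1, hk2, hk3⟩ := hmin (by omega)
          rcases eq_or_lt_of_le hk1 with heq | hlt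
          · rw [← heq] at hk3; exact hk3 hcon
          · exact hk3 ((Nat.find_spec hsex).2 k (by omega) hk2)
        obtain ⟨s, ⟨hsi, hchain⟩, hsmin⟩ := hsex2
        have hXsD0 : X s ∈ M.D0 (U s) := by
          rcases eq_or_lt_of_le hsi with heq | hlt
          · rw [heq, hD0u, hqfst]
            exact Set.mem_singleton _
          · have hA0 := hchain s le_rfl hlt
            have hg := hG0 s (by omega)
            rw [M.G0_A0 _ hA0] at hg
            exact hg.1
        have hXsR0 : 1 ≤ s → X s ∈ M.R0 (U (s-1)) := by
          intro hs1
          have h := hLu (s-1) (by omega)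
          rw [show s - 1 + 1 = s from by omega] at h
          exact h hXsD0
        have hsA1 : 1 ≤ s → U (s-1) ∈ M.A1 := by
          intro hs1
          rcases M.A_cover (U (s-1)) with h0 | h1 | h2
          · exact absurd h0 (hsmin hs1)
          · exact h1
          · exfalso
            obtain ⟨ρ', hρ'P, hRu', hR0u'⟩ := MarkovMultiMap.A2_pack h2
            rcases eq_or_lt_of_le hsi with heq | hslt
            · have hVU : V (i-1) = U (i-1) := himin (i-1) (by omega) (by omega)
              have h := hLv (i-1) (by omega)
              rw [show i - 1 + 1 = i from by omega, hVU] at h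
              rw [hD0] at h
              rw [heq] at hR0u'
              rw [hR0u'] at h
              have h1 := h (show (c+d)/2 ∈ Ioo c d from ⟨by linarith, by linarith⟩)
              have h2 := h (show (3*c+d)/4 ∈ Ioo c d from ⟨by linarith, by linarith⟩)
              rw [Set.mem_singleton_iff] at h1 h2
              linarith
            · have hsub' : M.D0 (U s) ⊆ {ρ'} := by
                have h := hLu (s-1) (by omega)
                rw [show s - 1 + 1 = s from by omega, hR0u'] at h
                exact h
              have hA0 := hchain s le_rfl hslt
              obtain ⟨c3, d3, -, -, hcd3, -, -, -, hD03, -, -, -, -, -, -, -, -⟩ :=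
                MarkovMultiMap.A0_pack hA0
              rw [hD03] at hsub'
              have h1 := hsub' (show (c3+d3)/2 ∈ Ioo c3 d3 from ⟨by linarith, by linarith⟩)
              have h2 := hsub' (show (3*c3+d3)/4 ∈ Ioo c3 d3 from ⟨by linarith, by linarith⟩)
              rw [Set.mem_singleton_iff] at h1 h2
              linarith
        -- margins around X s
        have hmargin : ∃ m0 : ℝ, 0 < m0 ∧ ∀ t : ℝ, |t - X s| < m0 →
            ((s < i → t ∈ M.D0 (U s)) ∧ (1 ≤ s → t ∈ M.R0 (U (s-1)))) := by
          by_cases hslt : s < i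
          · have hA0 := hchain s le_rfl hslt
            obtain ⟨c0, d0, -, -, hcd0, -, -, -, hD00, -, -, -, -, -, -, -, -⟩ :=
              MarkovMultiMap.A0_pack hA0
            have hXs0 : X s ∈ Ioo c0 d0 := by rw [← hD00]; exact hXsD0
            by_cases hs1 : 1 ≤ s
            · obtain ⟨α1, β1, hαβ1, -, -, -, hR01, -⟩ := MarkovMultiMap.A1_pack (hsA1 hs1)
              have hXs1 : X s ∈ Ioo α1 β1 := by rw [← hR01]; exact hXsR0 hs1
              refine ⟨min (min (X s - c0) (d0 - X s)) (min (X s - α1) (β1 - X s)),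
                lt_min (lt_min (by linarith [hXs0.1]) (by linarith [hXs0.2]))
                  (lt_min (by linarith [hXs1.1]) (by linarith [hXs1.2])), fun t ht => ?_⟩
              rw [abs_lt] at ht
              have l1 := min_le_left (min (X s - c0) (d0 - X s)) (min (X s - α1) (β1 - X s))
              have l2 := min_le_right (min (X s - c0) (d0 - X s)) (min (X s - α1) (β1 - X s))
              have l3 := min_le_left (X s - c0) (d0 - X s)
              have l4 := min_le_right (X s - c0) (d0 - X s)
              have l5 := min_le_left (X s - α1) (β1 - X s)
              have l6 := min_le_right (X s - α1) (β1 - X s)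
              constructor
              · intro _; rw [hD00]; exact ⟨by linarith, by linarith⟩
              · intro _; rw [hR01]; exact ⟨by linarith, by linarith⟩
            · refine ⟨min (X s - c0) (d0 - X s),
                lt_min (by linarith [hXs0.1]) (by linarith [hXs0.2]), fun t ht => ?_⟩
              rw [abs_lt] at ht
              have l3 := min_le_left (X s - c0) (d0 - X s)
              have l4 := min_le_right (X s - c0) (d0 - X s)
              constructor
              · intro _; rw [hD00]; exact ⟨by linarith, by linarith⟩
              · intro h; exact absurd h hs1
          · by_cases hs1 : 1 ≤ s
            · obtain ⟨α1, β1, hαβ1, -, -, -, hR01, -⟩ := MarkovMultiMap.A1_pack (hsA1 hs1)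
              have hXs1 : X s ∈ Ioo α1 β1 := by rw [← hR01]; exact hXsR0 hs1
              refine ⟨min (X s - α1) (β1 - X s),
                lt_min (by linarith [hXs1.1]) (by linarith [hXs1.2]), fun t ht => ?_⟩
              rw [abs_lt] at ht
              have l5 := min_le_left (X s - α1) (β1 - X s)
              have l6 := min_le_right (X s - α1) (β1 - X s)
              constructor
              · intro h; exact absurd h hslt
              · intro _; rw [hR01]; exact ⟨by linarith, by linarith⟩
            · exact ⟨1, one_pos, fun t _ => ⟨fun h => absurd h hslt, fun h => absurd h hs1⟩⟩
        obtain ⟨m0, hm0, hm0P⟩ := hmargin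
        -- the chain of maps
        let bb : ℝ → ℕ → ℝ := fun t m =>
          Nat.rec (motive := fun _ => ℝ) t (fun m' r => M.f (U (s + m')) r) m
        have hbbs : ∀ t m, bb t (m+1) = M.f (U (s + m)) (bb t m) := fun _ _ => rfl
        have hbbX : ∀ m, s + m ≤ i → bb (X s) m = X (s + m) := by
          intro m
          induction m with
          | zero => intro _; rfl
          | succ m ih =>
            intro h
            rw [hbbs, ih (by omega)]
            have hA0 := hchain (s+m) (by omega) (by omega)
            have hg := hG0 (s+m) (by omega)
            rw [M.G0_A0 _ hA0] at hg
            exact hg.2.symm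
        have hcont : ∀ m, s + m ≤ i → ∀ ε1 : ℝ, 0 < ε1 → ∃ δ1 : ℝ, 0 < δ1 ∧
            ∀ t : ℝ, |t - X s| < δ1 → (s < i → t ∈ M.D0 (U s)) →
            ∀ m', m' ≤ m → |bb t m' - X (s + m')| < ε1 ∧
              (s + m' < i → bb t m' ∈ M.D0 (U (s + m'))) := by
          intro m
          induction m with
          | zero =>
            intro _ ε1 hε1
            refine ⟨ε1, hε1, fun t ht htD0 m' hm' => ?_⟩
            have hm'0 : m' = 0 := by omega
            subst hm'0
            exact ⟨ht, fun h => htD0 (by omega)⟩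
          | succ m ih =>
            intro hsm ε1 hε1
            have hA0 := hchain (s+m) (by omega) (by omega)
            obtain ⟨c4, d4, α4, β4, hcd4, hαβ4, hD4, hR4, hD04, hR04, hfc4, hfb4, -, -, -, -, -⟩ :=
              MarkovMultiMap.A0_pack hA0
            have hXm : X (s+m) ∈ Ioo c4 d4 := by
              have hg := hG0 (s+m) (by omega)
              rw [M.G0_A0 _ hA0] at hg
              have h1 : X (s+m) ∈ M.D0 (U (s+m)) := hg.1
              rwa [hD04] at h1
            have hfXm : M.f (U (s+m)) (X (s+m)) = X (s+m+1) := by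
              have hg := hG0 (s+m) (by omega)
              rw [M.G0_A0 _ hA0] at hg
              exact hg.2.symm
            have htm : ∃ ρ1 : ℝ, 0 < ρ1 ∧ ∀ z : ℝ, |z - X (s+m+1)| < ρ1 →
                (s+m+1 < i → z ∈ M.D0 (U (s+m+1))) := by
              by_cases hlt : s+m+1 < i
              · have hA0' := hchain (s+m+1) (by omega) hlt
                obtain ⟨c5, d5, -, -, hcd5, -, -, -, hD05, -, -, -, -, -, -, -, -⟩ :=
                  MarkovMultiMap.A0_pack hA0'
                have hXm1 : X (s+m+1) ∈ Ioo c5 d5 := by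
                  have hg := hG0 (s+m+1) (by omega)
                  rw [M.G0_A0 _ hA0'] at hg
                  have h1 : X (s+m+1) ∈ M.D0 (U (s+m+1)) := hg.1
                  rwa [hD05] at h1
                refine ⟨min (X (s+m+1) - c5) (d5 - X (s+m+1)),
                  lt_min (by linarith [hXm1.1]) (by linarith [hXm1.2]), fun z hz _ => ?_⟩
                rw [hD05]
                rw [abs_lt] at hz
                have l1 := min_le_left (X (s+m+1) - c5) (d5 - X (s+m+1))
                have l2 := min_le_right (X (s+m+1) - c5) (d5 - X (s+m+1))
                exact ⟨by linarith, by linarith⟩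
              · exact ⟨1, one_pos, fun z _ h' => absurd h' hlt⟩
            obtain ⟨ρ1, hρ1, hρ1P⟩ := htm
            have hcw : ContinuousWithinAt (M.f (U (s+m))) (Icc c4 d4) (X (s+m)) :=
              hfc4.continuousWithinAt (Ioo_subset_Icc_self hXm)
            obtain ⟨γ, hγ, hγP⟩ := Metric.continuousWithinAt_iff.1 hcw (min ε1 ρ1) (by positivity)
            obtain ⟨δ1, hδ1, hIH⟩ := ih (by omega) (min ε1 γ) (by positivity)
            refine ⟨δ1, hδ1, fun t ht htD0 m' hm' => ?_⟩
            by_cases hm'' : m' ≤ m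
            · have h := hIH t ht htD0 m' hm''
              exact ⟨lt_of_lt_of_le h.1 (min_le_left _ _), h.2⟩
            · have hm'eq : m' = m + 1 := by omega
              subst hm'eq
              have hIHm := hIH t ht htD0 m le_rfl
              have hbbD : bb t m ∈ Ioo c4 d4 := by
                have h := hIHm.2 (by omega)
                rwa [hD04] at h
              have hdist2 : dist (bb t m) (X (s+m)) < γ := by
                rw [Real.dist_eq]
                exact lt_of_lt_of_le hIHm.1 (min_le_right _ _)
              have hnear := hγP (Ioo_subset_Icc_self hbbD) hdist2
              rw [Real.dist_eq, hfXm] at hnear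
              rw [hbbs]
              constructor
              · exact lt_of_lt_of_le hnear (min_le_left _ _)
              · intro h'
                exact hρ1P _ (lt_of_lt_of_le hnear (min_le_right _ _)) (by omega)
        obtain ⟨δc, hδc, hcontP⟩ := hcont (i - s) (by omega) (min δ ε) hδε
        have hδJ : (0:ℝ) < min (δc/2) (m0/2) := by positivity
        set δJ := min (δc/2) (m0/2) with hδJdef
        have hJsub : ∀ t : ℝ, t ∈ Icc (X s - δJ) (X s + δJ) → |t - X s| < δc ∧
            ((s < i → t ∈ M.D0 (U s)) ∧ (1 ≤ s → t ∈ M.R0 (U (s-1)))) := by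
          intro t ht
          have h1 : |t - X s| ≤ δJ := by
            rw [abs_le]; exact ⟨by linarith [ht.1], by linarith [ht.2]⟩
          have l1 := min_le_left (δc/2) (m0/2)
          have l2 := min_le_right (δc/2) (m0/2)
          rw [hδJdef] at h1
          exact ⟨by linarith, hm0P t (by linarith)⟩
        have hJmem : ∀ t : ℝ, t ∈ Icc (X s - δJ) (X s + δJ) → ∀ m', m' ≤ i - s →
            |bb t m' - X (s + m')| < min δ ε ∧ (s + m' < i → bb t m' ∈ M.D0 (U (s + m'))) :=
          fun t ht => hcontP t (hJsub t ht).1 (hJsub t ht).2.1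
        have hconton : ∀ m, m ≤ i - s →
            ContinuousOn (fun t => bb t m) (Icc (X s - δJ) (X s + δJ)) := by
          intro m
          induction m with
          | zero => intro _; exact continuousOn_id
          | succ m ih =>
            intro h
            have hA0 := hchain (s+m) (by omega) (by omega)
            obtain ⟨c4, d4, -, -, -, -, hD4, -, hD04, -, hfc4, -, -, -, -, -, -⟩ :=
              MarkovMultiMap.A0_pack hA0
            have heq : (fun t => bb t (m+1)) = (M.f (U (s+m))) ∘ (fun t => bb t m) := rfl
            rw [heq]
            refine ContinuousOn.comp hfc4 (ih (by omega)) ?_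
            intro t ht
            have h1 := (hJmem t ht m (by omega)).2 (by omega)
            rw [hD04] at h1
            exact Ioo_subset_Icc_self h1
        have hinjon : ∀ m, m ≤ i - s →
            Set.InjOn (fun t => bb t m) (Icc (X s - δJ) (X s + δJ)) := by
          intro m
          induction m with
          | zero => intro _ t1 _ t2 _ h; exact h
          | succ m ih =>
            intro h t1 ht1 t2 ht2 heq2
            have hA0 := hchain (s+m) (by omega) (by omega)
            obtain ⟨c4, d4, a4, b4, h1x, h2x, hD4, hR4x, hD04, hR04x, hfc4x, hfb4, hp1x, hp2x, hp3x, hp4x, hp5x⟩ :=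
              MarkovMultiMap.A0_pack hA0
            have h1 := (hJmem t1 ht1 m (by omega)).2 (by omega)
            have h2 := (hJmem t2 ht2 m (by omega)).2 (by omega)
            rw [hD04] at h1 h2
            have heq3 : bb t1 m = bb t2 m :=
              Set.BijOn.injOn hfb4 (Ioo_subset_Icc_self h1) (Ioo_subset_Icc_self h2) heq2
            exact ih (by omega) ht1 ht2 heq3
        have hXsJ : X s ∈ Icc (X s - δJ) (X s + δJ) := ⟨by linarith, by linarith⟩
        have htop : bb (X s) (i - s) = X i := by
          have h := hbbX (i - s) (by omega)
          rwa [show s + (i - s) = i from by omega] at h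
        have hsides := opposite_sides hδJ (hconton (i - s) le_rfl) (hinjon (i - s) le_rfl)
        have hwex : ∃ tstar : ℝ, tstar ∈ Icc (X s - δJ) (X s + δJ) ∧
            bb tstar (i - s) ∈ Ioo c d ∧ |bb tstar (i - s) - X i| < min δ ε := by
          rcases hxiend with hXic | hXid
          · -- X i = c : pick a value just above
            have hB : ∃ tE, tE ∈ Icc (X s - δJ) (X s + δJ) ∧ X i < bb tE (i - s) := by
              rcases hsides with ⟨h1, h2⟩ | ⟨h1, h2⟩
              · exact ⟨X s - δJ, ⟨le_rfl, by linarith⟩, by rw [← htop]; exact h2⟩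
              · exact ⟨X s + δJ, ⟨by linarith, le_rfl⟩, by rw [← htop]; exact h2⟩
            obtain ⟨tE, htE, hBgt⟩ := hB
            have hw1 : X i < min ((X i + bb tE (i - s))/2) (min ((c + d)/2) (X i + min δ ε / 2)) := by
              refine lt_min (by linarith) (lt_min ?_ (by linarith))
              rw [hXic]; linarith
            have hw2 : min ((X i + bb tE (i - s))/2) (min ((c + d)/2) (X i + min δ ε / 2)) <
                bb tE (i - s) := by
              have l := min_le_left ((X i + bb tE (i - s))/2) (min ((c + d)/2) (X i + min δ ε / 2))
              linarith
            have hw3 : min ((X i + bb tE (i - s))/2) (min ((c + d)/2) (X i + min δ ε / 2)) < d := by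
              have l := le_trans
                (min_le_right ((X i + bb tE (i - s))/2) (min ((c + d)/2) (X i + min δ ε / 2)))
                (min_le_left ((c + d)/2) (X i + min δ ε / 2))
              linarith
            have hw4 : min ((X i + bb tE (i - s))/2) (min ((c + d)/2) (X i + min δ ε / 2)) - X i <
                min δ ε := by
              have l := le_trans
                (min_le_right ((X i + bb tE (i - s))/2) (min ((c + d)/2) (X i + min δ ε / 2)))
                (min_le_right ((c + d)/2) (X i + min δ ε / 2))
              linarith
            obtain ⟨tstar, hts, hts2⟩ := intermediate_value_uIcc
              ((hconton (i - s) le_rfl).mono (Set.uIcc_subset_Icc hXsJ htE))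
              (show min ((X i + bb tE (i - s))/2) (min ((c + d)/2) (X i + min δ ε / 2)) ∈
                Set.uIcc (bb (X s) (i-s)) (bb tE (i-s)) by
                rw [htop, Set.mem_uIcc]; left; exact ⟨hw1.le, hw2.le⟩)
            have hts3 : bb tstar (i - s) =
                min ((X i + bb tE (i - s))/2) (min ((c + d)/2) (X i + min δ ε / 2)) := hts2
            refine ⟨tstar, Set.uIcc_subset_Icc hXsJ htE hts, ?_, ?_⟩
            · rw [hts3]
              exact ⟨lt_of_eq_of_lt hXic.symm hw1, hw3⟩
            · rw [hts3, abs_of_pos (by linarith)]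
              exact hw4
          · -- X i = d : pick a value just below
            have hB : ∃ tE, tE ∈ Icc (X s - δJ) (X s + δJ) ∧ bb tE (i - s) < X i := by
              rcases hsides with ⟨h1, h2⟩ | ⟨h1, h2⟩
              · exact ⟨X s + δJ, ⟨by linarith, le_rfl⟩, by rw [← htop]; exact h1⟩
              · exact ⟨X s - δJ, ⟨le_rfl, by linarith⟩, by rw [← htop]; exact h1⟩
            obtain ⟨tE, htE, hBlt⟩ := hB
            have hw1 : max ((X i + bb tE (i - s))/2) (max ((c + d)/2) (X i - min δ ε / 2)) < X i := by
              refine max_lt (by linarith) (max_lt ?_ (by linarith))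
              rw [hXid]; linarith
            have hw2 : bb tE (i - s) <
                max ((X i + bb tE (i - s))/2) (max ((c + d)/2) (X i - min δ ε / 2)) := by
              have l := le_max_left ((X i + bb tE (i - s))/2) (max ((c + d)/2) (X i - min δ ε / 2))
              linarith
            have hw3 : c < max ((X i + bb tE (i - s))/2) (max ((c + d)/2) (X i - min δ ε / 2)) := by
              have l := le_trans (le_max_left ((c + d)/2) (X i - min δ ε / 2))
                (le_max_right ((X i + bb tE (i - s))/2) (max ((c + d)/2) (X i - min δ ε / 2)))
              linarith
            have hw4 : X i - max ((X i + bb tE (i - s))/2) (max ((c + d)/2) (X i - min δ ε / 2)) <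
                min δ ε := by
              have l := le_trans (le_max_right ((c + d)/2) (X i - min δ ε / 2))
                (le_max_right ((X i + bb tE (i - s))/2) (max ((c + d)/2) (X i - min δ ε / 2)))
              linarith
            obtain ⟨tstar, hts, hts2⟩ := intermediate_value_uIcc
              ((hconton (i - s) le_rfl).mono (Set.uIcc_subset_Icc hXsJ htE))
              (show max ((X i + bb tE (i - s))/2) (max ((c + d)/2) (X i - min δ ε / 2)) ∈
                Set.uIcc (bb (X s) (i-s)) (bb tE (i-s)) by
                rw [htop, Set.mem_uIcc]; right; exact ⟨hw2.le, hw1.le⟩)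
            have hts3 : bb tstar (i - s) =
                max ((X i + bb tE (i - s))/2) (max ((c + d)/2) (X i - min δ ε / 2)) := hts2
            refine ⟨tstar, Set.uIcc_subset_Icc hXsJ htE hts, ?_, ?_⟩
            · rw [hts3]
              exact ⟨hw3, lt_of_lt_of_eq hw1 hXid⟩
            · rw [hts3, abs_of_neg (by linarith), neg_sub]
              exact hw4
        obtain ⟨tstar, htsJ, htsIoo, htscl⟩ := hwex
        refine ⟨fun k => if k < s then X k else bb tstar (k - s), ?_, ?_, ?_⟩
        · show (if i < s then X i else bb tstar (i - s)) ∈ Ioo c d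
          rw [if_neg (by omega)]
          exact htsIoo
        · intro k hk
          show ((if k < s then X k else bb tstar (k - s)),
            (if k + 1 < s then X (k+1) else bb tstar (k + 1 - s))) ∈ M.GF
          by_cases hks : k + 1 < s
          · rw [if_pos (by omega), if_pos hks]
            exact MarkovMultiMap.mem_GF_of_Gr (hGr k (by omega))
          · by_cases hks' : k < s
            · have hs1 : 1 ≤ s := by omega
              rw [if_pos hks', if_neg hks]
              obtain ⟨α1, β1, hαβ1, -, -, hR1, hR01, -⟩ := MarkovMultiMap.A1_pack (hsA1 hs1)
              obtain ⟨p1, -, hD1, -⟩ := MarkovMultiMap.A12_pack (Set.mem_union_left _ (hsA1 hs1))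
              have hfst : X (s-1) = p1 := by
                have hg := hG0 (s-1) (by omega)
                rw [M.G0_A1 _ (hsA1 hs1), hD1] at hg
                exact hg.1
              have htR0 : tstar ∈ M.R0 (U (s-1)) := (hJsub tstar htsJ).2.2 hs1
              refine MarkovMultiMap.mem_GF_of_Gr (a := U (s-1)) ?_
              rw [M.Gr_A12 _ (Set.mem_union_left _ (hsA1 hs1)), hD1, hR1]
              constructor
              · show X k ∈ ({p1} : Set ℝ)
                rw [show k = s - 1 from by omega]
                exact hfst
              · show bb tstar (k + 1 - s) ∈ Icc α1 β1
                rw [show k + 1 - s = 0 from by omega]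
                rw [hR01] at htR0
                exact Ioo_subset_Icc_self htR0
            · rw [if_neg hks', if_neg hks]
              have hA0 := hchain k (by omega) hk
              obtain ⟨c4, d4, -, -, -, -, hD4, -, hD04, -, -, -, -, -, -, -, -⟩ :=
                MarkovMultiMap.A0_pack hA0
              have hmem := (hJmem tstar htsJ (k - s) (by omega)).2 (by omega)
              rw [show s + (k - s) = k from by omega] at hmem
              refine MarkovMultiMap.mem_GF_of_Gr (a := U k) ?_
              rw [M.Gr_A0 _ hA0]
              constructor
              · show bb tstar (k - s) ∈ M.D (U k)
                rw [hD04] at hmem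
                rw [hD4]
                exact Ioo_subset_Icc_self hmem
              · show bb tstar (k + 1 - s) = M.f (U k) (bb tstar (k - s))
                rw [show k + 1 - s = (k - s) + 1 from by omega, hbbs,
                  show s + (k - s) = k from by omega]
        · intro k hk
          show |(if k < s then X k else bb tstar (k - s)) - X k| < min δ ε ∧
            (if k < s then X k else bb tstar (k - s)) ∈ Icc (0:ℝ) 1
          by_cases hks : k < s
          · rw [if_pos hks]
            exact ⟨by simpa using hδε, hXbox k⟩
          · rw [if_neg hks]
            have h1 := (hJmem tstar htsJ (k - s) (by omega)).1
            rw [show s + (k - s) = k from by omega] at h1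
            refine ⟨h1, ?_⟩
            by_cases hki : k < i
            · have h2 := (hJmem tstar htsJ (k - s) (by omega)).2 (by omega)
              rw [show s + (k - s) = k from by omega] at h2
              exact hD0unit _ (hchain k (by omega) hki) h2
            · have hkeq : k = i := by omega
              rw [hkeq]
              exact ⟨le_trans (MarkovMultiMap.unit_of_P hcP).1 htsIoo.1.le,
                le_trans htsIoo.2.le (MarkovMultiMap.unit_of_P hdP).2⟩
      obtain ⟨zd, hzdD0, hzde, hzdc⟩ := DOWN
      obtain ⟨zt, hzt0, hzte, hztc⟩ := hUPa (zd i)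
        (lt_of_lt_of_le (hzdc i le_rfl).1 (min_le_left _ _))
        (hzdc i le_rfl).2 (fun _ => by rw [hD0]; exact hzdD0)
      refine ⟨fun k => if k ≤ i then zd k else zt k, ?_, ?_, ?_⟩
      · intro k hk
        show |(if k ≤ i then zd k else zt k) - X k| < ε ∧ (if k ≤ i then zd k else zt k) ∈ Icc (0:ℝ) 1
        by_cases hki : k ≤ i
        · rw [if_pos hki]
          exact ⟨lt_of_lt_of_le (hzdc k hki).1 (min_le_right _ _), (hzdc k hki).2⟩
        · rw [if_neg hki]
          exact hztc k (by omega) hk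
      · intro k hk
        show ((if k ≤ i then zd k else zt k), (if k + 1 ≤ i then zd (k+1) else zt (k+1))) ∈ M.GF
        by_cases hki : k + 1 ≤ i
        · rw [if_pos (by omega), if_pos hki]
          exact hzde k (by omega)
        · by_cases hki' : k ≤ i
          · have hkieq : k = i := by omega
            rw [hkieq, if_pos le_rfl, if_neg (by omega)]
            have h := hzte i le_rfl hin
            rw [hzt0] at h
            exact MarkovMultiMap.mem_GF_of_Gr h
          · rw [if_neg hki', if_neg (by omega)]
            exact MarkovMultiMap.mem_GF_of_Gr (hzte k (by omega) hk)
      · show ¬ ((if i ≤ i then zd i else zt i), (if i + 1 ≤ i then zd (i+1) else zt (i+1))) ∈ M.G0 (U i)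
        rw [if_pos le_rfl, if_neg (by omega)]
        intro hmem
        have h := hG0fst _ hmem
        exact hxinD0 (by rw [← h]; exact hzdD0)
    · -- V i ∈ A1
      obtain ⟨p, hpP, hDv, hD0v⟩ := MarkovMultiMap.A12_pack (Set.mem_union_left _ hv1)
      obtain ⟨α, β, hαβ, hαP, hβP, hRv, hR0v, hRPv⟩ := MarkovMultiMap.A1_pack hv1
      have hq : X i = p ∧ X (i+1) ∈ Icc α β := by
        have h := hqGr
        rw [M.Gr_A12 _ (Set.mem_union_left _ hv1), hDv, hRv] at h
        exact ⟨h.1, h.2⟩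
      have hnotR0 : X (i+1) ∉ M.R0 (V i) := by
        intro hmem
        apply hqnotv
        rw [M.G0_A1 _ hv1, hDv]
        exact ⟨hq.1, hmem⟩
      have hend : X (i+1) = α ∨ X (i+1) = β :=
        hIccIoo hq.2 (by rw [← hR0v]; exact hnotR0)
      rcases M.A_cover (U i) with hu0 | hu1 | hu2
      · exfalso
        obtain ⟨c', d', -, -, hcd', -, -, -, hD0', -, -, -, -, -, -, -, hPno'⟩ :=
          MarkovMultiMap.A0_pack hu0
        have hmem : X i ∈ M.D0 (U i) := by
          have h := hqG0; rw [M.G0_A0 _ hu0] at h; exact h.1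
        rw [hD0'] at hmem
        exact hPno' p hpP (by rw [← hq.1]; exact ⟨hmem.1, hmem.2⟩)
      · exfalso
        obtain ⟨a', b', hab', haP', hbP', hR', hR0', hRP'⟩ := MarkovMultiMap.A1_pack hu1
        have hmem : X (i+1) ∈ Ioo a' b' := by
          have h := hqG0; rw [M.G0_A1 _ hu1, hR0'] at h; exact h.2
        have hP1 : X (i+1) ∈ (M.P : Set ℝ) := by
          rcases hend with h | h <;> rw [h] <;> exact Finset.mem_coe.2 (by assumption)
        have hmem2 : X (i+1) ∈ ({a', b'} : Set ℝ) := by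
          rw [← hRP']; exact ⟨Ioo_subset_Icc_self hmem, hP1⟩
        rcases hmem2 with h | h
        · rw [h] at hmem; exact lt_irrefl _ hmem.1
        · rw [Set.mem_singleton_iff.1 h] at hmem; exact lt_irrefl _ hmem.2
      · -- case (b) : U i ∈ A2
        obtain ⟨pu, hpuP, hDu, hD0u⟩ := MarkovMultiMap.A12_pack (Set.mem_union_right _ hu2)
        obtain ⟨ρ, hρP, hRu, hR0u⟩ := MarkovMultiMap.A2_pack hu2
        have hq2 : X i = pu ∧ X (i+1) = ρ := by
          have h := hqG0
          rw [M.G0_A2 _ hu2, M.Gr_A12 _ (Set.mem_union_right _ hu2), hDu, hRu] at h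
          exact ⟨h.1, h.2⟩
        have Hc1 := HcOf1 hnotR0
        obtain ⟨δ, hδ, hUPa⟩ := UP (n+1) (i+1) (by omega) Hc1 ε hε
        have hwex : ∃ w : ℝ, w ∈ Ioo α β ∧ w ≠ X (i+1) ∧ |w - X (i+1)| < min δ ε ∧
            (i + 1 ≤ n → w ∈ M.D0 (V (i+1))) := by
          have hδε : 0 < min δ ε := lt_min hδ hε
          by_cases hi1 : i + 1 ≤ n
          · obtain ⟨hv0', hxD', hxnD0', -⟩ := Hc1 (i+1) le_rfl hi1
            obtain ⟨c2, d2, α2, β2, hcd2, hαβ2, hD2, hR2, hD02, hR02, -, -, -, -, -, -, -⟩ :=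
              MarkovMultiMap.A0_pack hv0'
            have hsub2 : Ioo c2 d2 ⊆ Ioo α β := by
              rw [← hD02, ← hR0v]; exact hLv i hi1
            have hξD : X (i+1) = c2 ∨ X (i+1) = d2 := by
              refine hIccIoo ?_ ?_
              · rw [← hD2]; exact hxD'
              · rw [← hD02]; exact hxnD0'
            set θ := min (min δ ε) (min (β - α) (d2 - c2)) / 2 with hθdef
            have hθ : 0 < θ := by
              have h1 : (0:ℝ) < β - α := by linarith
              have h2 : (0:ℝ) < d2 - c2 := by linarith
              simp only [hθdef]
              positivity
            have hθ1 : θ < min δ ε := by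
              have := min_le_left (min δ ε) (min (β - α) (d2 - c2))
              simp only [hθdef]; linarith
            have hθ2 : θ < β - α := by
              have h1 := min_le_right (min δ ε) (min (β - α) (d2 - c2))
              have h2 := min_le_left (β - α) (d2 - c2)
              simp only [hθdef]; linarith
            have hθ3 : θ < d2 - c2 := by
              have h1 := min_le_right (min δ ε) (min (β - α) (d2 - c2))
              have h2 := min_le_right (β - α) (d2 - c2)
              simp only [hθdef]; linarith
            rcases hend with h | h
            · refine ⟨X (i+1) + θ, ⟨by rw [h]; linarith, by rw [h]; linarith⟩, by linarith,
                by rw [add_sub_cancel_left, abs_of_pos hθ]; exact hθ1, fun _ => ?_⟩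
              rw [hD02]
              refine trans_lem hcd2 hsub2 (Or.inl h) hξD
                ⟨by rw [h]; linarith, by rw [h]; linarith⟩ ?_
              rw [add_sub_cancel_left, abs_of_pos hθ]; exact hθ3
            · refine ⟨X (i+1) - θ, ⟨by rw [h]; linarith, by rw [h]; linarith⟩, by linarith,
                by rw [sub_sub_cancel_left, abs_neg, abs_of_pos hθ]; exact hθ1, fun _ => ?_⟩
              rw [hD02]
              refine trans_lem hcd2 hsub2 (Or.inr h) hξD
                ⟨by rw [h]; linarith, by rw [h]; linarith⟩ ?_
              rw [sub_sub_cancel_left, abs_neg, abs_of_pos hθ]; exact hθ3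
          · set θ := min (min δ ε) (β - α) / 2 with hθdef
            have hθ : 0 < θ := by
              have h1 : (0:ℝ) < β - α := by linarith
              simp only [hθdef]; positivity
            have hθ1 : θ < min δ ε := by
              have := min_le_left (min δ ε) (β - α)
              simp only [hθdef]; linarith
            have hθ2 : θ < β - α := by
              have := min_le_right (min δ ε) (β - α)
              simp only [hθdef]; linarith
            rcases hend with h | h
            · exact ⟨X (i+1) + θ, ⟨by rw [h]; linarith, by rw [h]; linarith⟩, by linarith,
                by rw [add_sub_cancel_left, abs_of_pos hθ]; exact hθ1,
                fun hcon => absurd hcon hi1⟩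
            · exact ⟨X (i+1) - θ, ⟨by rw [h]; linarith, by rw [h]; linarith⟩, by linarith,
                by rw [sub_sub_cancel_left, abs_neg, abs_of_pos hθ]; exact hθ1,
                fun hcon => absurd hcon hi1⟩
        obtain ⟨w, hwIoo, hwne, hwcl, hwD0⟩ := hwex
        have hwunit : w ∈ Icc (0:ℝ) 1 :=
          ⟨le_trans (MarkovMultiMap.unit_of_P hαP).1 hwIoo.1.le,
           le_trans hwIoo.2.le (MarkovMultiMap.unit_of_P hβP).2⟩
        obtain ⟨zt, hzt0, hzte, hztc⟩ := hUPa w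
          (lt_of_lt_of_le hwcl (min_le_left _ _)) hwunit hwD0
        refine ⟨fun k => if k ≤ i then X k else zt k, ?_, ?_, ?_⟩
        · intro k hk
          show |(if k ≤ i then X k else zt k) - X k| < ε ∧ (if k ≤ i then X k else zt k) ∈ Icc (0:ℝ) 1
          by_cases hki : k ≤ i
          · rw [if_pos hki]
            exact ⟨by simpa using hε, hXbox k⟩
          · rw [if_neg hki]
            exact hztc k (by omega) hk
        · intro k hk
          show ((if k ≤ i then X k else zt k), (if k + 1 ≤ i then X (k+1) else zt (k+1))) ∈ M.GF
          by_cases hki : k + 1 ≤ i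
          · rw [if_pos (by omega), if_pos hki]
            exact MarkovMultiMap.mem_GF_of_Gr (hGr k hk)
          · by_cases hki' : k ≤ i
            · have hkieq : k = i := by omega
              subst hkieq
              rw [if_pos le_rfl, if_neg hki, hzt0]
              refine MarkovMultiMap.mem_GF_of_Gr (a := V i) ?_
              rw [M.Gr_A12 _ (Set.mem_union_left _ hv1), hDv, hRv]
              exact ⟨hq.1, Ioo_subset_Icc_self hwIoo⟩
            · rw [if_neg hki', if_neg hki]
              exact MarkovMultiMap.mem_GF_of_Gr (hzte k (by omega) hk)
        · show ¬ ((if i ≤ i then X i else zt i), (if i + 1 ≤ i then X (i+1) else zt (i+1))) ∈ M.G0 (U i)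
          rw [if_pos le_rfl, if_neg (by omega), hzt0]
          intro hmem
          rw [M.G0_A2 _ hu2, M.Gr_A12 _ (Set.mem_union_right _ hu2), hDu, hRu] at hmem
          have : w = ρ := hmem.2
          rw [← hq2.2] at this
          exact hwne this
    · -- V i ∈ A2 : immediate contradiction
      exact absurd (by rw [M.G0_A2 _ hv2]; exact hqGr) hqnotv
  -- derive the contradiction
  obtain ⟨Y, hYc, hYe, hYv⟩ := main ε₀ hε₀
  have hymem : (fun j : Fin (n+2) => Y j.1) ∈ M.finTraj (n + 2) := by
    refine ⟨fun j => (hYc j.1 (by omega)).2, ?_⟩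
    intro j hj
    exact hYe j.1 (by omega)
  have hdist : dist (⟨fun j : Fin (n+2) => Y j.1, hymem⟩ : M.finTraj (n+2)) ⟨x, hx⟩ < ε₀ := by
    rw [Subtype.dist_eq, dist_pi_lt_iff hε₀]
    intro b
    rw [Real.dist_eq]
    have h := (hYc b.1 (by omega)).1
    rwa [hXk b.1 (by omega) (by omega), Fin.eta] at h
  have hspec : M.SpecialLabeled (fun j : Fin (n+2) => Y j.1) u :=
    hball (Metric.mem_ball.2 hdist)
  have hcontr := hspec ⟨i, by omega⟩
  apply hYv
  rw [hUk i hin (by omega)]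
  exact hcontr
end
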